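/- arXiv:1707.08483 — 4 statements merged into one kernel-verified Lean document; each statement's English description precedes it below -/
import Mathlib

section
/- Let n ≥ 2 be an integer, α > 0, p ∈ {1,…,n−1} coprime to n, and g a real number with M = 2πp/α − ng ≠ 0. Then for every x ∈ E_n, the point x belongs to the simplex Σ̄_{g,p} if and only if (1) sgn(M)·⟨a_{j,p}, x − ρ_p⟩ ≥ 0 for all j = 1,…,n−1, and (2) sgn(M)·⟨a_{max,p}, x − ρ_p⟩ ≤ |M|. -/
noncomputable section
open Real Finset
open scoped Classical

/-- The standard basis vector `e_j` of `ℝⁿ` (1-based index), extended `n`-periodically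
(`e_{n+j} = e_j`). -/
def ee (n j : ℕ) : Fin n → ℝ := fun i => if ((i : ℕ) + 1) % n = j % n then 1 else 0

/-- The standard inner product on `ℝⁿ`. -/
def inn {n : ℕ} (x y : Fin n → ℝ) : ℝ := ∑ i, x i * y i

/-- The coordinate `x_j` (1-based index) with the convention `x_{n+k} = x_k - 2π/α`. -/
def coord {n : ℕ} (α : ℝ) (x : Fin n → ℝ) (j : ℕ) : ℝ :=
  if h : 0 < n then x ⟨(j - 1) % n, Nat.mod_lt _ h⟩ - 2 * π / α * (((j - 1) / n : ℕ) : ℝ)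
  else 0

/-- The simple roots `a_{j,p} = e_j - e_{j+p}`. -/
def aa (n p j : ℕ) : Fin n → ℝ := ee n j - ee n (j + p)

/-- The closed simplex `Σ̄_{g,p} = {x ∈ E_n : sgn(M)(x_j - x_{j+p} - g) ≥ 0, j = 1,…,n}`,
where `M = 2πp/α - ng`. -/
def SigmaBar (n p : ℕ) (α g : ℝ) : Set (Fin n → ℝ) :=
  {x | (∑ i, x i) = 0 ∧ ∀ j ∈ Icc 1 n,
    0 ≤ Real.sign (2 * π * p / α - n * g) * (coord α x j - coord α x (j + p) - g)}

/-- The interior `Σ_{g,p}` of the simplex, cut out by the strict inequalities. -/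
def SigmaInt (n p : ℕ) (α g : ℝ) : Set (Fin n → ℝ) :=
  {x | (∑ i, x i) = 0 ∧ ∀ j ∈ Icc 1 n,
    0 < Real.sign (2 * π * p / α - n * g) * (coord α x j - coord α x (j + p) - g)}

/-- `g` is a type (i) coupling, with `q ∈ {1,…,n-1}` the multiplicative inverse of `p` mod `n`. -/
def TypeI (n p q : ℕ) (α g : ℝ) : Prop :=
  1 ≤ q ∧ q ≤ n - 1 ∧ (p * q) % n = 1 % n ∧
  ((2 * π / α * ((p : ℝ) / n - 1 / ((n : ℝ) * q)) < g ∧ g < 2 * π / α * ((p : ℝ) / n)) ∨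
   (2 * π / α * ((p : ℝ) / n) < g ∧
      g < 2 * π / α * ((p : ℝ) / n + 1 / ((n : ℝ) * ((n : ℝ) - q)))))

/-- `ρ_p = g(ω_{1,p}+…+ω_{n-p,p}) + (g - 2π/α)(ω_{n-p+1,p}+…+ω_{n-1,p})`. -/
def rhoP (n p : ℕ) (α g : ℝ) (ω : ℕ → Fin n → ℝ) : Fin n → ℝ :=
  g • (∑ j ∈ Icc 1 (n - p), ω j) + (g - 2 * π / α) • (∑ j ∈ Icc (n - p + 1) (n - 1), ω j)

/-- `Λ⁺_{p,|M|}`: nonnegative integral combinations of the `ω_{j,p}` with coefficient sum `≤ |M|`. -/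
def Lam (n : ℕ) (Mabs : ℝ) (ω : ℕ → Fin n → ℝ) : Set (Fin n → ℝ) :=
  {μ | ∃ m : ℕ → ℕ, (∑ j ∈ Icc 1 (n - 1), (m j : ℝ)) ≤ Mabs ∧
    μ = ∑ j ∈ Icc 1 (n - 1), (m j : ℝ) • ω j}

/-- The fundamental weight `ω_r = e_1+…+e_r - (r/n)(e_1+…+e_n)`. -/
def omegaStd (n r : ℕ) : Fin n → ℝ :=
  fun i => (if (i : ℕ) + 1 ≤ r then 1 else 0) - (r : ℝ) / n

/-- Membership in the orbit `S_n(ω_r)` of `ω_r` under coordinate permutations. -/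
def inOrbit (n r : ℕ) (ν : Fin n → ℝ) : Prop :=
  ∃ σ : Equiv.Perm (Fin n), ν = fun i => omegaStd n r (σ i)

/-- The orbit `S_n(ω_r)` as a finite set. -/
def orbitF (n r : ℕ) : Finset (Fin n → ℝ) :=
  Finset.image (fun σ : Equiv.Perm (Fin n) => fun i => omegaStd n r (σ i)) Finset.univ

/-- `V_ν(g;x) = ∏_{a ∈ A_{n-1}, ⟨a,ν⟩=1} sin(α(⟨a,x⟩+g)/2)/sin(α⟨a,x⟩/2)`. -/
def Vnu (n : ℕ) (α g : ℝ) (ν x : Fin n → ℝ) : ℝ :=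
  ∏ j ∈ Icc 1 n, ∏ k ∈ Icc 1 n,
    if j ≠ k ∧ inn (ee n j - ee n k) ν = 1 then
      Real.sin (α * (inn (ee n j - ee n k) x + g) / 2) /
        Real.sin (α * inn (ee n j - ee n k) x / 2)
    else 1

/-- `V_J(g;x) = ∏_{j∈J, k∉J} sin(α(x_j-x_k+g)/2)/sin(α(x_j-x_k)/2)`. -/
def VJ (n : ℕ) (α g : ℝ) (J : Finset ℕ) (x : Fin n → ℝ) : ℝ :=
  ∏ j ∈ J, ∏ k ∈ Icc 1 n \ J,
    Real.sin (α * (coord α x j - coord α x k + g) / 2) /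
      Real.sin (α * (coord α x j - coord α x k) / 2)

/-- `F_J(g;x) = ∏_{j,k∈J, j≠k} sin(α(x_j-x_k)/2)/sin(α(x_j-x_k+g)/2)`. -/
def FJ (n : ℕ) (α g : ℝ) (J : Finset ℕ) (x : Fin n → ℝ) : ℝ :=
  ∏ j ∈ J, ∏ k ∈ J,
    if j ≠ k then
      Real.sin (α * (coord α x j - coord α x k) / 2) /
        Real.sin (α * (coord α x j - coord α x k + g) / 2)
    else 1

/-- The trigonometric Pochhammer symbol `(z : sin_α)_m`. -/
def poch (α z : ℝ) (m : ℤ) : ℝ :=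
  if 0 ≤ m then ∏ l ∈ Finset.range m.toNat, Real.sin (α * (z + l) / 2)
  else 1 / ∏ l ∈ Finset.Icc 1 (-m).toNat, Real.sin (α * (z - l) / 2)

/-- Membership in the set of positive roots `A⁺_{n-1,p}`. -/
def inPosRoots (n p : ℕ) (v : Fin n → ℝ) : Prop :=
  (∃ j ∈ Icc 1 n, ∃ k ∈ Icc 1 n, j ≠ k ∧ v = ee n j - ee n k) ∧
  ∃ c : ℕ → ℕ, v = ∑ j ∈ Icc 1 (n - 1), (c j : ℝ) • aa n p j

/-- The lattice function `Δ_p(μ)`. -/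
def Delta (n p : ℕ) (α g : ℝ) (ω : ℕ → Fin n → ℝ) (μ : Fin n → ℝ) : ℝ :=
  ∏ j ∈ Icc 1 n, ∏ k ∈ Icc 1 n,
    if inPosRoots n p (ee n j - ee n k) then
      Real.sin (α * inn (ee n j - ee n k)
          (rhoP n p α g ω + Real.sign (2 * π * p / α - n * g) • μ) / 2) /
        Real.sin (α * inn (ee n j - ee n k) (rhoP n p α g ω) / 2) *
      (poch α (inn (ee n j - ee n k) (rhoP n p α g ω) +
            Real.sign (2 * π * p / α - n * g) * g)
          ⌊Real.sign (2 * π * p / α - n * g) * inn (ee n j - ee n k) μ⌋ /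
        poch α (inn (ee n j - ee n k) (rhoP n p α g ω) + 1 -
            Real.sign (2 * π * p / α - n * g) * g)
          ⌊Real.sign (2 * π * p / α - n * g) * inn (ee n j - ee n k) μ⌋)
    else 1

/-- The coefficient `W_ν(ρ_p + sgn(M)μ)` (equal to `0` when `μ + ν ∉ Λ⁺_{p,|M|}`). -/
def Wmu (n p : ℕ) (α g : ℝ) (ω : ℕ → Fin n → ℝ) (s : (Fin n → ℝ) → ℝ)
    (μ ν : Fin n → ℝ) : ℝ :=
  if μ + ν ∈ Lam n |2 * π * p / α - n * g| ω then
    s ν * Real.sqrt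
      (Vnu n α g ν (rhoP n p α g ω + Real.sign (2 * π * p / α - n * g) • μ) *
       Vnu n α g ν (-(rhoP n p α g ω) - Real.sign (2 * π * p / α - n * g) • (μ + ν)))
  else 0

/-- The discrete difference operator `Ŝ_{r,M}` acting on lattice functions. -/
def SOp (n p r : ℕ) (α g : ℝ) (ω : ℕ → Fin n → ℝ) (s : (Fin n → ℝ) → ℝ)
    (φ : (Fin n → ℝ) → ℂ) : (Fin n → ℝ) → ℂ :=
  fun x => ∑ ν ∈ orbitF n r,
    (Wmu n p α g ω s (Real.sign (2 * π * p / α - n * g) • (x - rhoP n p α g ω)) ν : ℂ) *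
      φ (x + Real.sign (2 * π * p / α - n * g) • ν)

/-- The inner product `(φ, ψ)_{p,M}` on lattice functions. -/
def ip (n p : ℕ) (α g : ℝ) (ω : ℕ → Fin n → ℝ) (φ ψ : (Fin n → ℝ) → ℂ) : ℂ :=
  ∑ᶠ μ ∈ Lam n |2 * π * p / α - n * g| ω,
    φ (rhoP n p α g ω + Real.sign (2 * π * p / α - n * g) • μ) *
      starRingEnd ℂ (ψ (rhoP n p α g ω + Real.sign (2 * π * p / α - n * g) • μ))

/-- The elementary symmetric function `ℰ_r(u) = Σ_{ν ∈ S_n(ω_r)} exp(iα⟨ν,u⟩)`. -/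
def calE (n r : ℕ) (α : ℝ) (u : Fin n → ℝ) : ℂ :=
  ∑ ν ∈ orbitF n r, Complex.exp (Complex.I * (α : ℂ) * (inn ν u : ℂ))

section Aux


lemma inn_sub_right' {n : ℕ} (v y z : Fin n → ℝ) : inn v (y - z) = inn v y - inn v z := by
  simp [inn, mul_sub, Finset.sum_sub_distrib]

lemma inn_sub_left' {n : ℕ} (u v y : Fin n → ℝ) : inn (u - v) y = inn u y - inn v y := by
  simp [inn, sub_mul, Finset.sum_sub_distrib]

lemma inn_add_right' {n : ℕ} (v y z : Fin n → ℝ) : inn v (y + z) = inn v y + inn v z := by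
  simp [inn, mul_add, Finset.sum_add_distrib]

lemma inn_smul_right' {n : ℕ} (c : ℝ) (v y : Fin n → ℝ) : inn v (c • y) = c * inn v y := by
  simp [inn, Finset.mul_sum, mul_left_comm]

lemma inn_sum_right' {n : ℕ} (v : Fin n → ℝ) (S : Finset ℕ) (f : ℕ → Fin n → ℝ) :
    inn v (∑ j ∈ S, f j) = ∑ j ∈ S, inn v (f j) := by
  simp only [inn, Finset.sum_apply, Finset.mul_sum]
  exact Finset.sum_comm

lemma inn_sum_left' {n : ℕ} (S : Finset ℕ) (f : ℕ → Fin n → ℝ) (y : Fin n → ℝ) :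
    inn (∑ j ∈ S, f j) y = ∑ j ∈ S, inn (f j) y := by
  simp only [inn, Finset.sum_apply, Finset.sum_mul]
  exact Finset.sum_comm

lemma inn_ee' {n : ℕ} (hn : 0 < n) (m : ℕ) (hm : 1 ≤ m) (y : Fin n → ℝ) :
    inn (ee n m) y = y ⟨(m - 1) % n, Nat.mod_lt _ hn⟩ := by
  unfold inn ee
  have key : ∀ i : Fin n, (((i : ℕ) + 1) % n = m % n) ↔ i = ⟨(m - 1) % n, Nat.mod_lt _ hn⟩ := by
    intro i
    obtain ⟨k, rfl⟩ : ∃ k, m = k + 1 := ⟨m - 1, by omega⟩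
    rw [Nat.add_sub_cancel]
    constructor
    · intro h
      have h2 : (i : ℕ) % n = k % n := Nat.ModEq.add_right_cancel' 1 h
      apply Fin.ext
      show (i : ℕ) = k % n
      rw [← h2, Nat.mod_eq_of_lt i.isLt]
    · rintro rfl
      show (k % n + 1) % n = (k + 1) % n
      rw [Nat.mod_add_mod]
  simp only [key]
  simp [Finset.sum_ite_eq']

lemma inn_aa' {n : ℕ} (hn : 0 < n) (p j : ℕ) (hj : 1 ≤ j) (y : Fin n → ℝ) :
    inn (aa n p j) y
      = y ⟨(j - 1) % n, Nat.mod_lt _ hn⟩ - y ⟨(j + p - 1) % n, Nat.mod_lt _ hn⟩ := by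
  unfold aa
  rw [inn_sub_left', inn_ee' hn j hj, inn_ee' hn (j + p) (by omega)]

lemma coord_eq' {n : ℕ} (hn : 0 < n) (α : ℝ) (x : Fin n → ℝ) (j : ℕ) :
    coord α x j = x ⟨(j - 1) % n, Nat.mod_lt _ hn⟩ - 2 * π / α * (((j - 1) / n : ℕ) : ℝ) := by
  unfold coord; rw [dif_pos hn]

lemma Dj_eq' {n p : ℕ} (hn : 2 ≤ n) (hp1 : 1 ≤ p) (hpn : p ≤ n - 1) (α g : ℝ) (x : Fin n → ℝ)
    (j : ℕ) (hj1 : 1 ≤ j) (hjn : j ≤ n) :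
    coord α x j - coord α x (j + p) - g
      = inn (aa n p j) x + (if j ≤ n - p then 0 else 2 * π / α) - g := by
  have hn0 : 0 < n := by omega
  rw [coord_eq' hn0, coord_eq' hn0, inn_aa' hn0 p j hj1]
  have h0 : (j - 1) % n = (j - 1) := Nat.mod_eq_of_lt (by omega)
  have h1 : (j - 1) / n = 0 := Nat.div_eq_of_lt (by omega)
  have h2 : (j + p - 1) / n = if j ≤ n - p then 0 else 1 := by
    split
    · exact Nat.div_eq_of_lt (by omega)
    · have h3 : j + p - 1 = (j + p - 1 - n) + n := by omega
      rw [h3, Nat.add_div_right _ hn0, Nat.div_eq_of_lt (by omega)]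
  rw [h1, h2]
  split <;> push_cast <;> ring

lemma sum_shift' {n : ℕ} (hn : 0 < n) (x : Fin n → ℝ) (s : ℕ) :
    ∑ j ∈ Icc 1 n, x ⟨(j + s - 1) % n, Nat.mod_lt _ hn⟩ = ∑ i, x i := by
  haveI : NeZero n := ⟨hn.ne'⟩
  rw [show Icc 1 n = Ico 1 (n + 1) from by rw [Finset.Ico_add_one_right_eq_Icc],
    Finset.sum_Ico_eq_sum_range, show n + 1 - 1 = n from by omega]
  rw [← Fin.sum_univ_eq_sum_range (fun k => x ⟨(1 + k + s - 1) % n, Nat.mod_lt _ hn⟩) n]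
  rw [← Equiv.sum_comp (Equiv.addRight (Fin.ofNat n s)) x]
  apply Finset.sum_congr rfl
  intro i _
  congr 1
  apply Fin.ext
  simp only [Equiv.coe_addRight, Fin.val_add, Fin.val_ofNat]
  rw [show 1 + (i : ℕ) + s - 1 = (i : ℕ) + s from by omega, Nat.add_mod,
    Nat.mod_eq_of_lt i.isLt]

lemma sum_shift0' {n : ℕ} (hn : 0 < n) (x : Fin n → ℝ) :
    ∑ j ∈ Icc 1 n, x ⟨(j - 1) % n, Nat.mod_lt _ hn⟩ = ∑ i, x i := by
  rw [← sum_shift' hn x 0]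
  apply Finset.sum_congr rfl
  intro j _
  congr 1

lemma inn_aa_rho' {n p : ℕ} (hn : 2 ≤ n) (hp1 : 1 ≤ p) (hpn : p ≤ n - 1) (α g : ℝ)
    (ω : ℕ → Fin n → ℝ)
    (hωδ : ∀ j : ℕ, 1 ≤ j → j ≤ n - 1 → ∀ k : ℕ, 1 ≤ k → k ≤ n - 1 →
      inn (aa n p j) (ω k) = if j = k then (1 : ℝ) else 0)
    (j : ℕ) (hj1 : 1 ≤ j) (hjn : j ≤ n - 1) :
    inn (aa n p j) (rhoP n p α g ω) = g - (if j ≤ n - p then 0 else 2 * π / α) := by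
  unfold rhoP
  rw [inn_add_right', inn_smul_right', inn_smul_right', inn_sum_right', inn_sum_right']
  have e1 : ∑ k ∈ Icc 1 (n - p), inn (aa n p j) (ω k) = if j ≤ n - p then (1 : ℝ) else 0 := by
    rw [Finset.sum_congr rfl (fun k hk => hωδ j hj1 hjn k (Finset.mem_Icc.mp hk).1
      (by have := (Finset.mem_Icc.mp hk).2; omega))]
    rw [Finset.sum_ite_eq (Icc 1 (n - p)) j fun _ => (1 : ℝ)]
    simp only [Finset.mem_Icc]
    split_ifs <;> first | rfl | omega
  have e2 : ∑ k ∈ Icc (n - p + 1) (n - 1), inn (aa n p j) (ω k)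
      = if j ≤ n - p then (0 : ℝ) else 1 := by
    rw [Finset.sum_congr rfl (fun k hk => hωδ j hj1 hjn k
      (by have := (Finset.mem_Icc.mp hk).1; omega) (Finset.mem_Icc.mp hk).2)]
    rw [Finset.sum_ite_eq (Icc (n - p + 1) (n - 1)) j fun _ => (1 : ℝ)]
    simp only [Finset.mem_Icc]
    split_ifs <;> first | rfl | omega
  rw [e1, e2]
  split_ifs <;> ring

lemma sum_D' {n p : ℕ} (hn : 2 ≤ n) (hp1 : 1 ≤ p) (hpn : p ≤ n - 1) (α g : ℝ)
    (x : Fin n → ℝ) (hx : ∑ i, x i = 0) :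
    ∑ j ∈ Icc 1 n, (coord α x j - coord α x (j + p) - g)
      = 2 * π * (p : ℝ) / α - (n : ℝ) * g := by
  have hn0 : 0 < n := by omega
  rw [Finset.sum_congr rfl (fun j hj => Dj_eq' hn hp1 hpn α g x j
    (Finset.mem_Icc.mp hj).1 (Finset.mem_Icc.mp hj).2)]
  rw [Finset.sum_sub_distrib, Finset.sum_add_distrib, Finset.sum_const, Nat.card_Icc]
  have hA : ∑ j ∈ Icc 1 n, inn (aa n p j) x = 0 := by
    rw [Finset.sum_congr rfl (fun j hj => inn_aa' hn0 p j (Finset.mem_Icc.mp hj).1 x)]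
    rw [Finset.sum_sub_distrib, sum_shift0' hn0 x, sum_shift' hn0 x p, sub_self]
  have hB : ∑ j ∈ Icc 1 n, (if j ≤ n - p then (0 : ℝ) else 2 * π / α)
      = (p : ℝ) * (2 * π / α) := by
    rw [Finset.sum_congr rfl (fun j _ => show (if j ≤ n - p then (0 : ℝ) else 2 * π / α)
      = if n - p + 1 ≤ j then 2 * π / α else 0 by split_ifs <;> first | rfl | omega)]
    rw [← Finset.sum_filter]
    have hf : (Icc 1 n).filter (fun j => n - p + 1 ≤ j) = Icc (n - p + 1) n := by
      ext j; simp only [Finset.mem_filter, Finset.mem_Icc]; omega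
    rw [hf, Finset.sum_const, Nat.card_Icc, show n + 1 - (n - p + 1) = p from by omega,
      nsmul_eq_mul]
  rw [hA, hB, show n + 1 - 1 = n from by omega, nsmul_eq_mul]
  ring


end Aux

/-- Lemma 2.1: characterisation of the simplex `Σ̄_{g,p}` via the
`p`-dependent simple roots and the maximal root `a_{max,p} = a_{1,p}+…+a_{n-1,p}`. -/
theorem statement0 (n p : ℕ) (α g : ℝ)
    (hn : 2 ≤ n) (hα : 0 < α) (hp1 : 1 ≤ p) (hpn : p ≤ n - 1) (hcop : Nat.Coprime p n)
    (hM : 2 * π * p / α - n * g ≠ 0)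
    (ω : ℕ → Fin n → ℝ)
    (hωE : ∀ k : ℕ, 1 ≤ k → k ≤ n - 1 → ∑ i, ω k i = 0)
    (hωδ : ∀ j : ℕ, 1 ≤ j → j ≤ n - 1 → ∀ k : ℕ, 1 ≤ k → k ≤ n - 1 →
      inn (aa n p j) (ω k) = if j = k then (1 : ℝ) else 0)
    (x : Fin n → ℝ) (hx : ∑ i, x i = 0) :
    x ∈ SigmaBar n p α g ↔
      ((∀ j : ℕ, 1 ≤ j → j ≤ n - 1 →
          0 ≤ Real.sign (2 * π * p / α - n * g) *
            inn (aa n p j) (x - rhoP n p α g ω)) ∧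
        Real.sign (2 * π * p / α - n * g) *
            inn (∑ j ∈ Icc 1 (n - 1), aa n p j) (x - rhoP n p α g ω) ≤
          |2 * π * p / α - n * g|) := by
  have hn0 : 0 < n := by omega
  simp only [SigmaBar, Set.mem_setOf_eq]
  set M : ℝ := 2 * π * (p : ℝ) / α - (n : ℝ) * g with hMdef
  set s : ℝ := Real.sign M with hsdef
  have hs : s = 1 ∨ s = -1 := by
    rcases lt_or_gt_of_ne hM with h | h
    · right; rw [hsdef]; exact Real.sign_of_neg h
    · left; rw [hsdef]; exact Real.sign_of_pos h
  have habs : |M| = s * M := by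
    rcases lt_or_gt_of_ne hM with h | h
    · rw [abs_of_neg h, hsdef, Real.sign_of_neg h]; ring
    · rw [abs_of_pos h, hsdef, Real.sign_of_pos h]; ring
  have key1 : ∀ j, 1 ≤ j → j ≤ n - 1 →
      inn (aa n p j) (x - rhoP n p α g ω) = coord α x j - coord α x (j + p) - g := by
    intro j h1 h2
    rw [inn_sub_right', inn_aa_rho' hn hp1 hpn α g ω hωδ j h1 h2,
      Dj_eq' hn hp1 hpn α g x j h1 (by omega)]
    ring
  have key3 : ∑ j ∈ Icc 1 n, (coord α x j - coord α x (j + p) - g) = M :=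
    sum_D' hn hp1 hpn α g x hx
  have hsplit : ∑ j ∈ Icc 1 n, (coord α x j - coord α x (j + p) - g)
      = (∑ j ∈ Icc 1 (n - 1), (coord α x j - coord α x (j + p) - g))
        + (coord α x n - coord α x (n + p) - g) := by
    have h := Finset.sum_Icc_succ_top (a := 1) (b := n - 1) (by omega)
      (fun j => coord α x j - coord α x (j + p) - g)
    rw [show n - 1 + 1 = n from by omega] at h
    exact h
  have key4 : inn (∑ j ∈ Icc 1 (n - 1), aa n p j) (x - rhoP n p α g ω)
      = ∑ j ∈ Icc 1 (n - 1), (coord α x j - coord α x (j + p) - g) := by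
    rw [inn_sum_left']
    exact Finset.sum_congr rfl fun j hj =>
      key1 j (Finset.mem_Icc.mp hj).1 (Finset.mem_Icc.mp hj).2
  have hsum1 : ∑ j ∈ Icc 1 (n - 1), (coord α x j - coord α x (j + p) - g)
      = M - (coord α x n - coord α x (n + p) - g) := by
    rw [← key3, hsplit]; ring
  constructor
  · rintro ⟨-, h⟩
    constructor
    · intro j h1 h2
      rw [key1 j h1 h2]
      exact h j (Finset.mem_Icc.mpr ⟨h1, by omega⟩)
    · have hDn : 0 ≤ s * (coord α x n - coord α x (n + p) - g) :=
        h n (Finset.mem_Icc.mpr ⟨by omega, le_refl n⟩)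
      rw [key4, hsum1, habs]
      nlinarith [hDn]
  · rintro ⟨h1, h2⟩
    refine ⟨hx, ?_⟩
    intro j hj
    obtain ⟨hj1, hjn⟩ := Finset.mem_Icc.mp hj
    by_cases hcase : j ≤ n - 1
    · rw [← key1 j hj1 hcase]
      exact h1 j hj1 hcase
    · have hj' : j = n := by omega
      subst hj'
      rw [key4, hsum1, habs] at h2
      nlinarith [h2]
end
end

section
/- Let n ≥ 2 be an integer, α > 0, p ∈ {1,…,n−1} coprime to n, and g a real number with M = 2πp/α − ng ≠ 0. Then every lattice point ρ_p + sgn(M)·μ with μ ∈ Λ⁺_{p,|M|} belongs to the simplex Σ̄_{g,p}. -/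
noncomputable section
open Real Finset
open scoped Classical

namespace St1

variable {n : ℕ}

lemma inn_sub_left (x y z : Fin n → ℝ) : inn (x - y) z = inn x z - inn y z := by
  simp [inn, sub_mul, Finset.sum_sub_distrib]

lemma inn_add_right (x y z : Fin n → ℝ) : inn x (y + z) = inn x y + inn x z := by
  simp [inn, mul_add, Finset.sum_add_distrib]

lemma inn_smul_right (c : ℝ) (x y : Fin n → ℝ) : inn x (c • y) = c * inn x y := by
  simp [inn, Finset.mul_sum, mul_left_comm]

lemma inn_sum_right {ι : Type*} (s : Finset ι) (x : Fin n → ℝ) (f : ι → Fin n → ℝ) :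
    inn x (∑ j ∈ s, f j) = ∑ j ∈ s, inn x (f j) := by
  simp only [inn, Finset.sum_apply, Finset.mul_sum]
  exact Finset.sum_comm

lemma inn_ee (hn : 0 < n) (j : ℕ) (hj : 1 ≤ j) (x : Fin n → ℝ) :
    inn (ee n j) x = x ⟨(j - 1) % n, Nat.mod_lt _ hn⟩ := by
  have hcond : ∀ i : Fin n, ((((i : ℕ) + 1) % n = j % n)) ↔
      i = (⟨(j - 1) % n, Nat.mod_lt _ hn⟩ : Fin n) := by
    intro i
    constructor
    · intro h
      have hb : ((j - 1) % n + 1) % n = j % n := by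
        rw [Nat.mod_add_mod]
        congr 1
        omega
      have h2 : (i : ℕ) % n = ((j - 1) % n) % n :=
        Nat.ModEq.add_right_cancel' 1 (h.trans hb.symm)
      apply Fin.ext
      simpa [Nat.mod_eq_of_lt i.isLt, Nat.mod_mod_of_dvd _ dvd_rfl] using h2
    · rintro rfl
      show ((j - 1) % n + 1) % n = j % n
      rw [Nat.mod_add_mod]
      congr 1
      omega
  simp only [inn, ee]
  simp only [hcond, ite_mul, one_mul, zero_mul]
  simp

lemma sum_cyc (hn : 0 < n) (x : Fin n → ℝ) (a : ℕ) :
    ∑ j ∈ Icc 1 n, x ⟨(j - 1 + a) % n, Nat.mod_lt _ hn⟩ = ∑ i, x i := by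
  haveI : NeZero n := ⟨hn.ne'⟩
  rw [← Finset.Ico_add_one_right_eq_Icc, Finset.sum_Ico_eq_sum_range]
  simp only [Nat.add_sub_cancel_left, Nat.succ_sub_one, Nat.add_sub_cancel]
  rw [← Fin.sum_univ_eq_sum_range (fun i => x ⟨(i + a) % n, Nat.mod_lt _ hn⟩) n]
  have key : ∀ i : Fin n, (⟨((i : ℕ) + a) % n, Nat.mod_lt _ hn⟩ : Fin n)
      = i + ⟨a % n, Nat.mod_lt _ hn⟩ := by
    intro i
    apply Fin.ext
    show ((i : ℕ) + a) % n = ((i + ⟨a % n, Nat.mod_lt _ hn⟩ : Fin n) : ℕ)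
    rw [Fin.val_add]
    conv_lhs => rw [Nat.add_mod]
    simp [Nat.mod_eq_of_lt i.isLt]
  simp_rw [key]
  exact Fintype.sum_equiv (Equiv.addRight (⟨a % n, Nat.mod_lt _ hn⟩ : Fin n)) _ _ (fun i => rfl)

end St1

open St1

/-- every lattice point `ρ_p + sgn(M)μ` with `μ ∈ Λ⁺_{p,|M|}` belongs to the
simplex `Σ̄_{g,p}`. -/
theorem statement1 (n p : ℕ) (α g : ℝ)
    (hn : 2 ≤ n) (hα : 0 < α) (hp1 : 1 ≤ p) (hpn : p ≤ n - 1) (hcop : Nat.Coprime p n)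
    (hM : 2 * π * p / α - n * g ≠ 0)
    (ω : ℕ → Fin n → ℝ)
    (hωE : ∀ k : ℕ, 1 ≤ k → k ≤ n - 1 → ∑ i, ω k i = 0)
    (hωδ : ∀ j : ℕ, 1 ≤ j → j ≤ n - 1 → ∀ k : ℕ, 1 ≤ k → k ≤ n - 1 →
      inn (aa n p j) (ω k) = if j = k then (1 : ℝ) else 0) :
    ∀ μ ∈ Lam n |2 * π * p / α - n * g| ω,
      rhoP n p α g ω + Real.sign (2 * π * p / α - n * g) • μ ∈ SigmaBar n p α g := by
  have hn0 : 0 < n := by omega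
  have hpn' : p ≤ n := by omega
  intro μ hμ
  obtain ⟨m, hmsum, rfl⟩ := hμ
  simp only [SigmaBar, Set.mem_setOf_eq]
  set M : ℝ := 2 * π * p / α - n * g with hMdef
  set s : ℝ := Real.sign M with hsdef
  set μt : Fin n → ℝ := ∑ j ∈ Icc 1 (n - 1), (m j : ℝ) • ω j with hμt
  set x : Fin n → ℝ := rhoP n p α g ω + s • μt with hx
  have hs2 : s * s = 1 := by
    rcases hM.lt_or_gt with h | h
    · rw [hsdef, Real.sign_of_neg h]; norm_num
    · rw [hsdef, Real.sign_of_pos h]; norm_num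
  have hsM : s * M = |M| := by
    rcases hM.lt_or_gt with h | h
    · rw [hsdef, Real.sign_of_neg h, abs_of_neg h]; ring
    · rw [hsdef, Real.sign_of_pos h, abs_of_pos h]; ring
  -- the pairing of x with the simple roots
  have hA : ∀ j, 1 ≤ j → j ≤ n - 1 →
      inn (aa n p j) (∑ k ∈ Icc 1 (n - p), ω k) = if j ≤ n - p then 1 else 0 := by
    intro j h1 h2
    rw [inn_sum_right]
    rw [Finset.sum_congr rfl (fun k hk => hωδ j h1 h2 k
      (by simp only [Finset.mem_Icc] at hk; omega)
      (by simp only [Finset.mem_Icc] at hk; omega))]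
    rw [Finset.sum_ite_eq]
    simp [Finset.mem_Icc, h1]
  have hB : ∀ j, 1 ≤ j → j ≤ n - 1 →
      inn (aa n p j) (∑ k ∈ Icc (n - p + 1) (n - 1), ω k) = if j ≤ n - p then 0 else 1 := by
    intro j h1 h2
    rw [inn_sum_right]
    rw [Finset.sum_congr rfl (fun k hk => hωδ j h1 h2 k
      (by simp only [Finset.mem_Icc] at hk; omega)
      (by simp only [Finset.mem_Icc] at hk; omega))]
    rw [Finset.sum_ite_eq]
    simp only [Finset.mem_Icc]
    split_ifs <;> first | rfl | (exfalso; omega)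
  have hMu : ∀ j, 1 ≤ j → j ≤ n - 1 → inn (aa n p j) μt = m j := by
    intro j h1 h2
    rw [hμt, inn_sum_right]
    simp_rw [inn_smul_right]
    rw [Finset.sum_congr rfl (fun k hk => by
      rw [hωδ j h1 h2 k (by simp only [Finset.mem_Icc] at hk; omega)
        (by simp only [Finset.mem_Icc] at hk; omega)])]
    simp_rw [mul_ite, mul_one, mul_zero]
    rw [Finset.sum_ite_eq]
    simp [Finset.mem_Icc, h1, h2]
  have hxinn : ∀ j, 1 ≤ j → j ≤ n - 1 →
      inn (aa n p j) x = (if j ≤ n - p then g else g - 2 * π / α) + s * m j := by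
    intro j h1 h2
    rw [hx, inn_add_right, inn_smul_right, hMu j h1 h2, rhoP, inn_add_right,
      inn_smul_right, inn_smul_right, hA j h1 h2, hB j h1 h2]
    split_ifs <;> ring
  -- coordinates vs inner products
  have hcoord : ∀ (y : Fin n → ℝ) (j : ℕ), coord α y j
      = y ⟨(j - 1) % n, Nat.mod_lt _ hn0⟩ - 2 * π / α * (((j - 1) / n : ℕ) : ℝ) :=
    fun y j => dif_pos hn0
  have hxdiff : ∀ j, 1 ≤ j →
      x ⟨(j - 1) % n, Nat.mod_lt _ hn0⟩ - x ⟨(j + p - 1) % n, Nat.mod_lt _ hn0⟩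
        = inn (aa n p j) x := by
    intro j h1
    rw [aa, inn_sub_left, inn_ee hn0 j h1, inn_ee hn0 (j + p) (by omega)]
  refine ⟨?_, ?_⟩
  · -- sum of coordinates is zero
    have hsum : ∀ (T : Finset ℕ), (∀ j ∈ T, 1 ≤ j ∧ j ≤ n - 1) →
        ∑ i, (∑ j ∈ T, ω j) i = 0 := by
      intro T hT
      simp only [Finset.sum_apply]
      rw [Finset.sum_comm]
      exact Finset.sum_eq_zero fun j hj => hωE j (hT j hj).1 (hT j hj).2
    have h1 : ∑ i, (∑ j ∈ Icc 1 (n - p), ω j) i = 0 :=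
      hsum _ fun j hj => by simp only [Finset.mem_Icc] at hj; omega
    have h2 : ∑ i, (∑ j ∈ Icc (n - p + 1) (n - 1), ω j) i = 0 :=
      hsum _ fun j hj => by simp only [Finset.mem_Icc] at hj; omega
    have h3 : ∑ i, μt i = 0 := by
      rw [hμt]
      simp only [Finset.sum_apply, Pi.smul_apply, smul_eq_mul]
      rw [Finset.sum_comm]
      refine Finset.sum_eq_zero fun j hj => ?_
      simp only [Finset.mem_Icc] at hj
      rw [← Finset.mul_sum, hωE j hj.1 hj.2, mul_zero]
    have hr : ∑ i, rhoP n p α g ω i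
        = g * (∑ i, (∑ j ∈ Icc 1 (n - p), ω j) i)
          + (g - 2 * π / α) * (∑ i, (∑ j ∈ Icc (n - p + 1) (n - 1), ω j) i) := by
      simp only [rhoP, Pi.add_apply, Pi.smul_apply, smul_eq_mul, Finset.sum_add_distrib,
        Finset.mul_sum]
    have : ∑ i, x i = ∑ i, rhoP n p α g ω i + s * ∑ i, μt i := by
      rw [hx]
      simp only [Pi.add_apply, Pi.smul_apply, smul_eq_mul, Finset.sum_add_distrib,
        Finset.mul_sum]
    rw [this, hr, h1, h2, h3]
    ring
  · -- the simplex inequalities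
    intro j hj
    simp only [Finset.mem_Icc] at hj
    rcases eq_or_lt_of_le hj.2 with hjn | hjn
    · -- the affine root j = n
      rw [hjn]
      have hcn : coord α x n = x ⟨(n - 1) % n, Nat.mod_lt _ hn0⟩ := by
        rw [hcoord, Nat.div_eq_of_lt (by omega)]
        simp
      have hcnp : coord α x (n + p)
          = x ⟨(n + p - 1) % n, Nat.mod_lt _ hn0⟩ - 2 * π / α := by
        rw [hcoord, (Nat.div_eq_of_lt_le (k := 1) (by omega) (by omega) :
          (n + p - 1) / n = 1)]
        simp
      -- split off the top term of the cyclic sums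
      have hsplit : ∀ f : ℕ → ℝ, ∑ j ∈ Icc 1 n, f j = ∑ j ∈ Icc 1 (n - 1), f j + f n := by
        intro f
        conv_lhs => rw [show n = (n - 1) + 1 by omega]
        rw [Finset.sum_Icc_succ_top (by omega), show (n - 1) + 1 = n by omega]
      have hfull1 : ∑ j ∈ Icc 1 (n - 1), x ⟨(j - 1) % n, Nat.mod_lt _ hn0⟩
          + x ⟨(n - 1) % n, Nat.mod_lt _ hn0⟩ = ∑ i, x i := by
        rw [← hsplit fun j => x ⟨(j - 1) % n, Nat.mod_lt _ hn0⟩]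
        simpa using sum_cyc hn0 x 0
      have hfull2 : ∑ j ∈ Icc 1 (n - 1), x ⟨(j + p - 1) % n, Nat.mod_lt _ hn0⟩
          + x ⟨(n + p - 1) % n, Nat.mod_lt _ hn0⟩ = ∑ i, x i := by
        rw [← hsplit fun j => x ⟨(j + p - 1) % n, Nat.mod_lt _ hn0⟩]
        rw [← sum_cyc hn0 x p]
        refine Finset.sum_congr rfl fun k hk => ?_
        simp only [Finset.mem_Icc] at hk
        have hkk : k + p - 1 = k - 1 + p := by omega
        exact congrArg x (Fin.ext (by rw [hkk]))
      -- evaluate the telescoping sum via the root pairings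
      have htel : ∑ j ∈ Icc 1 (n - 1),
          (x ⟨(j - 1) % n, Nat.mod_lt _ hn0⟩ - x ⟨(j + p - 1) % n, Nat.mod_lt _ hn0⟩)
          = ((n - p : ℕ) : ℝ) * g + ((p - 1 : ℕ) : ℝ) * (g - 2 * π / α)
            + s * ∑ j ∈ Icc 1 (n - 1), (m j : ℝ) := by
        rw [Finset.sum_congr rfl (fun k hk => by
          rw [hxdiff k (by simp only [Finset.mem_Icc] at hk; omega),
            hxinn k (by simp only [Finset.mem_Icc] at hk; omega)
              (by simp only [Finset.mem_Icc] at hk; omega)])]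
        rw [Finset.sum_add_distrib, ← Finset.mul_sum, Finset.sum_ite,
          Finset.sum_const, Finset.sum_const]
        have hf1 : Finset.filter (fun j => j ≤ n - p) (Icc 1 (n - 1)) = Icc 1 (n - p) := by
          ext k
          simp only [Finset.mem_filter, Finset.mem_Icc]
          omega
        have hf2 : Finset.filter (fun j => ¬ j ≤ n - p) (Icc 1 (n - 1))
            = Icc (n - p + 1) (n - 1) := by
          ext k
          simp only [Finset.mem_filter, Finset.mem_Icc]
          omega
        rw [hf1, hf2, Nat.card_Icc, Nat.card_Icc]
        have hc1 : n - p + 1 - 1 = n - p := by omega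
        have hc2 : n - 1 + 1 - (n - p + 1) = p - 1 := by omega
        rw [hc1, hc2]
        simp [nsmul_eq_mul]
      have hsub : ∑ j ∈ Icc 1 (n - 1),
          (x ⟨(j - 1) % n, Nat.mod_lt _ hn0⟩ - x ⟨(j + p - 1) % n, Nat.mod_lt _ hn0⟩)
          = x ⟨(n + p - 1) % n, Nat.mod_lt _ hn0⟩ - x ⟨(n - 1) % n, Nat.mod_lt _ hn0⟩ := by
        rw [Finset.sum_sub_distrib]
        linarith [hfull1, hfull2]
      have hcast1 : ((n - p : ℕ) : ℝ) = (n : ℝ) - p := by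
        rw [Nat.cast_sub hpn']
      have hcast2 : ((p - 1 : ℕ) : ℝ) = (p : ℝ) - 1 := by
        rw [Nat.cast_sub hp1]
        simp
      have hD : coord α x n - coord α x (n + p) - g
          = M - s * ∑ j ∈ Icc 1 (n - 1), (m j : ℝ) := by
        rw [hcn, hcnp, hMdef]
        have := hsub.symm.trans htel
        rw [hcast1, hcast2] at this
        have hpi : 2 * π * (p : ℝ) / α = 2 * π / α * p := by ring
        rw [hpi]
        linarith [this]
      rw [hD]
      have : s * (M - s * ∑ j ∈ Icc 1 (n - 1), (m j : ℝ))
          = |M| - (s * s) * ∑ j ∈ Icc 1 (n - 1), (m j : ℝ) := by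
        rw [← hsM]; ring
      rw [this, hs2, one_mul]
      linarith [hmsum]
    · -- the simple roots j ≤ n - 1
      have hj2 : j ≤ n - 1 := by omega
      have e3 := hxdiff j hj.1
      have hxi := hxinn j hj.1 hj2
      have hcj : coord α x j = x ⟨(j - 1) % n, Nat.mod_lt _ hn0⟩ := by
        rw [hcoord, Nat.div_eq_of_lt (by omega)]
        simp
      have key : coord α x j - coord α x (j + p) - g = s * m j := by
        rcases le_or_gt (j + p) n with hle | hlt
        · have hcjp : coord α x (j + p) = x ⟨(j + p - 1) % n, Nat.mod_lt _ hn0⟩ := by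
            rw [hcoord, Nat.div_eq_of_lt (by omega)]
            simp
          rw [if_pos (by omega : j ≤ n - p)] at hxi
          rw [hcj, hcjp]
          linarith [e3.trans hxi]
        · have hcjp : coord α x (j + p)
              = x ⟨(j + p - 1) % n, Nat.mod_lt _ hn0⟩ - 2 * π / α := by
            rw [hcoord, (Nat.div_eq_of_lt_le (k := 1) (by omega) (by omega) :
              (j + p - 1) / n = 1)]
            simp
          rw [if_neg (by omega : ¬ j ≤ n - p)] at hxi
          rw [hcj, hcjp]
          linarith [e3.trans hxi]
      rw [key, ← mul_assoc, hs2, one_mul]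
      positivity
end
end

section
/- Let n ≥ 2 be an integer, p ∈ {1,…,n−1} coprime to n, and 1 ≤ j < k ≤ n. Then there exists a unique ℓ ∈ {1,…,n−1} with j + ℓp ≡ k (mod n). Defining i_t ∈ {1,…,n} by i_t ≡ j + (t−1)p (mod n) for t = 1,…,ℓ, the indices i_1,…,i_ℓ are pairwise distinct, the telescoping identity e_j − e_k = Σ_{t=1}^{ℓ} (e_{i_t} − e_{i_t+p}) holds (with the convention e_{n+i} = e_i), and the set K = {i_t : n−p < i_t ≤ n, t = 1,…,ℓ} has cardinality |K| = (j − k + ℓp)/n, which satisfies |K| < p. -/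
noncomputable section
open Real Finset
open scoped Classical

lemma ee_congr {n a b : ℕ} (h : a % n = b % n) : ee n a = ee n b := by
  funext i; simp [ee, h]

/-- decomposition of a positive root `e_j - e_k` as a telescoping sum of the
`p`-dependent simple roots, with distinct intermediate indices `i_t ≡ j + (t-1)p (mod n)`,
and the count `|K| = (j - k + ℓp)/n < p` of indices with `n - p < i_t ≤ n`. -/
theorem statement6 (n p j k : ℕ)
    (hn : 2 ≤ n) (hp1 : 1 ≤ p) (hpn : p ≤ n - 1) (hcop : Nat.Coprime p n)
    (hj : 1 ≤ j) (hjk : j < k) (hk : k ≤ n) :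
    (∃! ℓ : ℕ, ℓ ∈ Icc 1 (n - 1) ∧ (j + ℓ * p) % n = k % n) ∧
    ∀ ℓ : ℕ, ℓ ∈ Icc 1 (n - 1) → (j + ℓ * p) % n = k % n →
      (∀ s ∈ Icc 1 ℓ, ∀ t ∈ Icc 1 ℓ, s ≠ t →
        (j + (s - 1) * p - 1) % n + 1 ≠ (j + (t - 1) * p - 1) % n + 1) ∧
      (ee n j - ee n k =
        ∑ t ∈ Icc 1 ℓ, (ee n ((j + (t - 1) * p - 1) % n + 1) -
          ee n ((j + (t - 1) * p - 1) % n + 1 + p))) ∧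
      ((Icc 1 ℓ).filter (fun t => n - p < (j + (t - 1) * p - 1) % n + 1)).card =
        (j + ℓ * p - k) / n ∧
      (j + ℓ * p - k) / n < p := by
  have hn0 : 0 < n := by omega
  haveI : NeZero n := ⟨by omega⟩
  have hpu : IsUnit (p : ZMod n) := (ZMod.isUnit_iff_coprime p n).mpr hcop
  have hpc : ∀ a b : ZMod n, a * p = b * p → a = b := by
    intro a b h
    have h' : (p : ZMod n) * a = (p : ZMod n) * b := by
      rw [mul_comm _ a, mul_comm _ b]; exact h
    exact hpu.mul_left_cancel h'
  -- a key mod-cast helper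
  have hcast : ∀ a b : ℕ, a % n = b % n ↔ (a : ZMod n) = b := by
    intro a b; exact (ZMod.natCast_eq_natCast_iff a b n).symm
  constructor
  · -- existence and uniqueness
    set u : ZMod n := ((k : ZMod n) - j) * (p : ZMod n)⁻¹ with hu
    have hup : u * p = (k : ZMod n) - j := by
      rw [hu, mul_assoc, ZMod.inv_mul_of_unit _ hpu, mul_one]
    have hune : u ≠ 0 := by
      intro h0
      have : (k : ZMod n) - j = 0 := by rw [← hup, h0, zero_mul]
      have hkj : (k : ZMod n) = (j : ZMod n) := by
        have := sub_eq_zero.mp this; exact this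
      have hmm : k % n = j % n := (hcast k j).mpr hkj
      rcases eq_or_lt_of_le hk with h | h
      · have : k % n = 0 := by rw [h, Nat.mod_self]
        have : j % n = 0 := by omega
        have : j % n = j := Nat.mod_eq_of_lt (by omega)
        omega
      · have h1 : k % n = k := Nat.mod_eq_of_lt h
        have h2 : j % n = j := Nat.mod_eq_of_lt (by omega)
        omega
    have huval : (u.val : ZMod n) = u := by
      rw [ZMod.natCast_val, ZMod.cast_id]
    have hmem : u.val ∈ Icc 1 (n - 1) := by
      rw [mem_Icc]
      have h1 : u.val < n := ZMod.val_lt u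
      have h2 : u.val ≠ 0 := fun h => hune (by rwa [ZMod.val_eq_zero] at h)
      omega
    have hmodeq : (j + u.val * p) % n = k % n := by
      rw [hcast]
      push_cast
      rw [huval, hup]; ring
    refine ⟨u.val, ⟨hmem, hmodeq⟩, ?_⟩
    rintro y ⟨hymem, hymod⟩
    rw [mem_Icc] at hymem
    have h1 : ((j + y * p : ℕ) : ZMod n) = ((j + u.val * p : ℕ) : ZMod n) := by
      rw [← hcast, hymod, ← hmodeq]
    push_cast at h1
    have h2 : (y : ZMod n) * p = (u.val : ZMod n) * p := by
      have := add_left_cancel h1; exact this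
    have h3 : (y : ZMod n) = u := by rw [← huval]; exact hpc _ _ h2
    calc y = ((y : ZMod n)).val := (ZMod.val_natCast_of_lt (by omega)).symm
    _ = u.val := by rw [h3]
  · intro ℓ hℓ hmod
    rw [mem_Icc] at hℓ
    obtain ⟨hℓ1, hℓ2⟩ := hℓ
    -- distinctness
    have hdist : ∀ s ∈ Icc 1 ℓ, ∀ t ∈ Icc 1 ℓ, s ≠ t →
        (j + (s - 1) * p - 1) % n + 1 ≠ (j + (t - 1) * p - 1) % n + 1 := by
      intro s hs t ht hst heq
      rw [mem_Icc] at hs ht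
      have h0 : (j + (s - 1) * p - 1) % n = (j + (t - 1) * p - 1) % n := by omega
      have h1 : (j + (s - 1) * p) % n = (j + (t - 1) * p) % n := by
        have hs1 : j + (s - 1) * p - 1 + 1 = j + (s - 1) * p := by omega
        have ht1 : j + (t - 1) * p - 1 + 1 = j + (t - 1) * p := by omega
        calc (j + (s - 1) * p) % n = ((j + (s-1)*p - 1) % n + 1) % n := by
              rw [Nat.mod_add_mod, hs1]
        _ = ((j + (t-1)*p - 1) % n + 1) % n := by rw [h0]
        _ = (j + (t - 1) * p) % n := by rw [Nat.mod_add_mod, ht1]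
      rw [hcast] at h1
      push_cast at h1
      have h2 : ((s - 1 : ℕ) : ZMod n) = ((t - 1 : ℕ) : ZMod n) :=
        hpc _ _ (add_left_cancel h1)
      have h3 : s - 1 = t - 1 := by
        calc s - 1 = (((s - 1 : ℕ) : ZMod n)).val := (ZMod.val_natCast_of_lt (by omega)).symm
        _ = (((t - 1 : ℕ) : ZMod n)).val := by rw [h2]
        _ = t - 1 := ZMod.val_natCast_of_lt (by omega)
      omega
    refine ⟨hdist, ?_, ?_⟩
    · -- telescoping
      have hstep : ∀ t ∈ Icc 1 ℓ,
          ee n ((j + (t - 1) * p - 1) % n + 1) - ee n ((j + (t - 1) * p - 1) % n + 1 + p)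
          = ee n (j + (t - 1) * p) - ee n (j + t * p) := by
        intro t ht
        rw [mem_Icc] at ht
        have h1 : ee n ((j + (t - 1) * p - 1) % n + 1) = ee n (j + (t - 1) * p) := by
          apply ee_congr
          rw [Nat.mod_add_mod]
          congr 1; omega
        have h2 : ee n ((j + (t - 1) * p - 1) % n + 1 + p) = ee n (j + t * p) := by
          apply ee_congr
          have : (j + (t - 1) * p - 1) % n + 1 + p = (j + (t-1)*p - 1) % n + (1 + p) := by ring
          rw [this, Nat.mod_add_mod]
          congr 1
          have htp : t * p = (t - 1) * p + p := by
            obtain ⟨t'', rfl⟩ : ∃ t'', t = t'' + 1 := ⟨t - 1, by omega⟩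
            simp [Nat.add_mul]
          omega
        rw [h1, h2]
      rw [Finset.sum_congr rfl hstep]
      have hIcc : Icc 1 ℓ = Ico 1 (ℓ + 1) := by rw [Finset.Ico_add_one_right_eq_Icc]
      rw [hIcc, Finset.sum_Ico_eq_sum_range]
      simp only [Nat.add_sub_cancel]
      have : ∀ i ∈ range ℓ,
          ee n (j + (1 + i - 1) * p) - ee n (j + (1 + i) * p)
          = (fun t => ee n (j + t * p)) i - (fun t => ee n (j + t * p)) (i + 1) := by
        intro i _
        simp only [show 1 + i = i + 1 from by omega, Nat.add_sub_cancel]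
      rw [Finset.sum_congr rfl this, Finset.sum_range_sub' (fun t => ee n (j + t * p)) ℓ]
      simp only [Nat.zero_mul, Nat.add_zero]
      congr 1
      exact (ee_congr hmod).symm
    · -- cardinality
      have hkD : k ≤ j + ℓ * p := by
        by_contra hlt
        push_neg at hlt
        have hDn : j + ℓ * p < n := by omega
        have h1 : (j + ℓ * p) % n = j + ℓ * p := Nat.mod_eq_of_lt hDn
        rcases eq_or_lt_of_le hk with h | h
        · have : k % n = 0 := by rw [h, Nat.mod_self]
          omega
        · have : k % n = k := Nat.mod_eq_of_lt h
          omega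
      obtain ⟨m, hm⟩ := (Nat.modEq_iff_dvd' hkD).mp (Nat.ModEq.symm hmod)
      have hdivk : (j + ℓ * p - k) / n = m := by
        rw [hm, Nat.mul_div_cancel_left m hn0]
      set q : ℕ → ℕ := fun t => (j + t * p - 1) / n with hq
      have hstep : ∀ t ∈ Icc 1 ℓ,
          (if n - p < (j + (t - 1) * p - 1) % n + 1 then 1 else 0) = q t - q (t - 1) := by
        intro t ht
        rw [mem_Icc] at ht
        obtain ⟨t', rfl⟩ : ∃ t', t = t' + 1 := ⟨t - 1, by omega⟩
        simp only [Nat.add_sub_cancel, hq]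
        set a := j + t' * p - 1 with ha
        have hap : j + (t' + 1) * p - 1 = a + p := by
          have : (t' + 1) * p = t' * p + p := by ring
          omega
        rw [hap]
        have hdm := Nat.div_add_mod a n
        set d := a / n with hd
        set r := a % n with hr
        have hrn : r < n := Nat.mod_lt _ hn0
        have h1 : (a + p) / n = d + (r + p) / n := by
          have : a + p = n * d + (r + p) := by omega
          rw [this, Nat.mul_add_div hn0]
        have hs2 : (r + p) / n < 2 := Nat.div_lt_of_lt_mul (by omega)
        by_cases hc : n ≤ r + p
        · have hs1 : 1 ≤ (r + p) / n := (Nat.one_le_div_iff hn0).mpr hc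
          have : (r + p) / n = 1 := by omega
          rw [if_pos (by omega)]
          omega
        · push_neg at hc
          have : (r + p) / n = 0 := Nat.div_eq_of_lt hc
          rw [if_neg (by omega)]
          omega
      have hcard : ((Icc 1 ℓ).filter (fun t => n - p < (j + (t - 1) * p - 1) % n + 1)).card
          = q ℓ - q 0 := by
        rw [Finset.card_filter, Finset.sum_congr rfl hstep]
        have hIcc : Icc 1 ℓ = Ico 1 (ℓ + 1) := by rw [Finset.Ico_add_one_right_eq_Icc]
        rw [hIcc, Finset.sum_Ico_eq_sum_range]
        simp only [Nat.add_sub_cancel]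
        have hre : ∀ i ∈ range ℓ, q (1 + i) - q (1 + i - 1) = q (i + 1) - q i := by
          intro i _
          simp only [show 1 + i = i + 1 from by omega, Nat.add_sub_cancel]
        rw [Finset.sum_congr rfl hre]
        exact Finset.sum_range_tsub (fun x y hxy => by
          apply Nat.div_le_div_right
          have : x * p ≤ y * p := Nat.mul_le_mul_right p hxy
          omega) ℓ
      have hq0 : q 0 = 0 := by
        simp only [hq, Nat.zero_mul, Nat.add_zero]
        exact Nat.div_eq_of_lt (by omega)
      have hqℓ : q ℓ = m := by
        simp only [hq]
        have : j + ℓ * p - 1 = n * m + (k - 1) := by omega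
        rw [this, Nat.mul_add_div hn0, Nat.div_eq_of_lt (by omega)]
        omega
      constructor
      · rw [hcard, hq0, hqℓ, hdivk]
        omega
      · rw [hdivk]
        have h1 : ℓ * p ≤ (n - 1) * p := Nat.mul_le_mul_right p hℓ2
        have h2 : (n - 1) * p = n * p - p := by
          rw [Nat.sub_mul, one_mul]
        have h3 : n * m < n * p := by omega
        exact Nat.lt_of_mul_lt_mul_left h3
end
end

section
/- Let n ≥ 2 be an integer, α > 0, p ∈ {1,…,n−1} coprime to n, and let g be a type (i) coupling satisfying the quantisation condition M ∈ ℤ ∖ {0}. Assume in addition that g does not belong to the finite set {(1 − sgn(M)·A + B·(2π/α))/C : A ∈ {0,1,…,|M|}, B ∈ {0,1,…,p−1}, C ∈ {1,…,n−1}}. Then for every r ∈ {1,…,n−1}, every ν ∈ S_n(ω_r), and every μ ∈ Λ⁺_{p,|M|} with μ+ν ∉ Λ⁺_{p,|M|}: all sine denominators occurring in V_ν(g; −ρ_p−sgn(M)(μ+ν)) are nonzero, so that this value is a finite real number. -/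
noncomputable section
open Real Finset
open scoped Classical

section Statement9Helpers

lemma s9_inn_sub_left {n : ℕ} (x y z : Fin n → ℝ) : inn (x - y) z = inn x z - inn y z := by
  simp [inn, sub_mul, Finset.sum_sub_distrib]

lemma s9_inn_add_right {n : ℕ} (x y z : Fin n → ℝ) : inn x (y + z) = inn x y + inn x z := by
  simp [inn, mul_add, Finset.sum_add_distrib]

lemma s9_inn_neg_right {n : ℕ} (x y : Fin n → ℝ) : inn x (-y) = -inn x y := by
  simp [inn]

lemma s9_inn_neg_left {n : ℕ} (x y : Fin n → ℝ) : inn (-x) y = -inn x y := by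
  simp [inn]

lemma s9_inn_sub_right {n : ℕ} (x y z : Fin n → ℝ) : inn x (y - z) = inn x y - inn x z := by
  simp [inn, mul_sub, Finset.sum_sub_distrib]

lemma s9_inn_smul_right {n : ℕ} (c : ℝ) (x y : Fin n → ℝ) : inn x (c • y) = c * inn x y := by
  simp only [inn, Pi.smul_apply, smul_eq_mul, Finset.mul_sum]
  exact Finset.sum_congr rfl (fun i _ => by ring)

lemma s9_inn_sum_left {n : ℕ} {ι : Type*} (s : Finset ι) (f : ι → Fin n → ℝ) (y : Fin n → ℝ) :
    inn (∑ i ∈ s, f i) y = ∑ i ∈ s, inn (f i) y := by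
  simp [inn, Finset.sum_mul]
  exact Finset.sum_comm

lemma s9_inn_sum_right {n : ℕ} {ι : Type*} (s : Finset ι) (x : Fin n → ℝ) (f : ι → Fin n → ℝ) :
    inn x (∑ i ∈ s, f i) = ∑ i ∈ s, inn x (f i) := by
  simp [inn, Finset.mul_sum]
  exact Finset.sum_comm

lemma s9_ee_mod (n a b : ℕ) (h : a % n = b % n) : ee n a = ee n b := by
  unfold ee; rw [h]

lemma s9_aa_mod (n p a b : ℕ) (h : a % n = b % n) : aa n p a = aa n p b := by
  unfold aa
  rw [s9_ee_mod n a b h, s9_ee_mod n (a + p) (b + p) (Nat.ModEq.add_right p h)]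

lemma s9_mod_inj_Icc {n u v : ℕ} (hu1 : 1 ≤ u) (hun : u ≤ n) (hv1 : 1 ≤ v) (hvn : v ≤ n)
    (h : u % n = v % n) : u = v := by
  rcases le_total u v with hle | hle
  · have hd : n ∣ v - u := (Nat.modEq_iff_dvd' hle).1 h
    have hlt : v - u < n := by omega
    have := Nat.eq_zero_of_dvd_of_lt hd hlt
    omega
  · have hd : n ∣ u - v := (Nat.modEq_iff_dvd' hle).1 h.symm
    have hlt : u - v < n := by omega
    have := Nat.eq_zero_of_dvd_of_lt hd hlt
    omega

lemma s9_sum_ee_shift (n s : ℕ) (hn : 0 < n) :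
    (∑ u ∈ Icc 1 n, ee n (u + s)) = fun _ => (1 : ℝ) := by
  funext i
  rw [Finset.sum_apply]
  have hin : (i : ℕ) < n := i.isLt
  set r := s % n with hr
  have hrn : r < n := Nat.mod_lt _ hn
  set u₀ : ℕ := ((i : ℕ) + (n - r)) % n + 1 with hu₀
  have hu₀1 : 1 ≤ u₀ := by omega
  have hu₀n : u₀ ≤ n := by
    have : ((i : ℕ) + (n - r)) % n < n := Nat.mod_lt _ hn
    omega
  have hkey : (u₀ + s) % n = ((i : ℕ) + 1) % n := by
    have h2 : (((i:ℕ) + (n - r)) % n + 1 + s) ≡ ((i:ℕ) + (n - r) + 1 + s) [MOD n] := by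
      exact Nat.ModEq.add_right _ (Nat.ModEq.add_right _ (Nat.mod_modEq _ _))
    have h3 : ((i:ℕ) + (n - r) + 1 + s) ≡ ((i:ℕ) + (n - r) + 1 + r) [MOD n] := by
      exact Nat.ModEq.add_left _ ((Nat.mod_modEq s n).symm)
    have h4 : (i:ℕ) + (n - r) + 1 + r = (i:ℕ) + 1 + n := by omega
    calc (u₀ + s) % n = ((i:ℕ) + (n - r) + 1 + s) % n := h2
      _ = ((i:ℕ) + (n - r) + 1 + r) % n := h3
      _ = ((i:ℕ) + 1 + n) % n := by rw [h4]
      _ = ((i:ℕ) + 1) % n := Nat.add_mod_right _ _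
  rw [Finset.sum_eq_single u₀]
  · simp [ee, hkey]
  · intro u hu hne
    simp only [Finset.mem_Icc] at hu
    simp only [ee]
    rw [if_neg]
    intro hcon
    exact hne (s9_mod_inj_Icc hu.1 hu.2 hu₀1 hu₀n (by
      have h6 : (u + s) ≡ (u₀ + s) [MOD n] := by
        show (u + s) % n = (u₀ + s) % n
        rw [hkey, hcon]
      exact Nat.ModEq.add_right_cancel' s h6))
  · intro h
    exfalso
    exact h (Finset.mem_Icc.mpr ⟨hu₀1, hu₀n⟩)

lemma s9_aa_sum_zero (n p : ℕ) (hn : 0 < n) : (∑ u ∈ Icc 1 n, aa n p u) = 0 := by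
  unfold aa
  rw [Finset.sum_sub_distrib]
  have h1 := s9_sum_ee_shift n 0 hn
  have h2 := s9_sum_ee_shift n p hn
  simp only [Nat.add_zero] at h1
  rw [h1, h2]
  funext i; simp

lemma s9_tele (n p j k T : ℕ) (hT : (j + T * p) % n = k % n) :
    ee n j - ee n k = ∑ t ∈ Finset.range T, aa n p (j + t * p) := by
  have h1 : ∀ t : ℕ, aa n p (j + t * p) = ee n (j + t * p) - ee n (j + (t + 1) * p) := by
    intro t
    unfold aa
    congr 2
    ring
  calc ee n j - ee n k = ee n (j + 0 * p) - ee n (j + T * p) := by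
        rw [s9_ee_mod n (j + T * p) k hT]; norm_num
    _ = ∑ t ∈ Finset.range T, (ee n (j + t * p) - ee n (j + (t + 1) * p)) :=
        (Finset.sum_range_sub' (fun t => ee n (j + t * p)) T).symm
    _ = ∑ t ∈ Finset.range T, aa n p (j + t * p) := by
        exact Finset.sum_congr rfl (fun t _ => (h1 t).symm)

lemma s9_pairing (n p : ℕ) (hn : 2 ≤ n) (ω : ℕ → Fin n → ℝ)
    (hωδ : ∀ j : ℕ, 1 ≤ j → j ≤ n - 1 → ∀ k : ℕ, 1 ≤ k → k ≤ n - 1 →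
      inn (aa n p j) (ω k) = if j = k then (1 : ℝ) else 0)
    (l c : ℕ) (hl1 : 1 ≤ l) (hln : l ≤ n) (hc1 : 1 ≤ c) (hcn : c ≤ n - 1) :
    inn (aa n p l) (ω c) = (if l = c then (1:ℝ) else 0) - (if l = n then 1 else 0) := by
  rcases eq_or_lt_of_le hln with rfl | hlt
  · have hsplit : (Icc 1 l) = insert l (Icc 1 (l - 1)) := by
      ext x
      simp only [Finset.mem_Icc, Finset.mem_insert]
      omega
    have hzero := s9_aa_sum_zero l p (by omega)
    rw [hsplit, Finset.sum_insert (by simp [Finset.mem_Icc]; omega)] at hzero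
    have haan : aa l p l = -∑ u ∈ Icc 1 (l - 1), aa l p u := by
      linear_combination (norm := abel) hzero
    rw [haan, s9_inn_neg_left, s9_inn_sum_left]
    have hsum : ∑ u ∈ Icc 1 (l - 1), inn (aa l p u) (ω c) = 1 := by
      have h2 : ∀ u ∈ Icc 1 (l - 1), inn (aa l p u) (ω c) = if u = c then (1:ℝ) else 0 := by
        intro u hu
        simp only [Finset.mem_Icc] at hu
        exact hωδ u hu.1 hu.2 c hc1 hcn
      rw [Finset.sum_congr rfl h2, Finset.sum_ite_eq' (Icc 1 (l-1)) c (fun _ => (1:ℝ))]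
      simp [Finset.mem_Icc, hc1, hcn]
    rw [hsum]
    have h1 : ¬ (l = c) := by omega
    simp [h1]
  · have hln1 : l ≤ n - 1 := by omega
    rw [hωδ l hl1 hln1 c hc1 hcn]
    have : l ≠ n := by omega
    simp [this]

end Statement9Helpers


lemma s9_nat_modeq_pn (n p q : ℕ) (hq : q ≤ n) (hpq : p * q % n = 1 % n) :
    n ∣ p * (n - q) + 1 := by
  have h1 : p * (n - q) + p * q = p * n := by
    rw [← Nat.mul_add, Nat.sub_add_cancel hq]
  have h2 : p * (n - q) + 1 ≡ p * (n - q) + p * q [MOD n] :=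
    Nat.ModEq.add_left _ (hpq.symm)
  have h3 : p * (n - q) + p * q ≡ 0 [MOD n] := by
    rw [h1]
    exact (Nat.mul_mod_left p n).trans (Nat.zero_mod n).symm
  exact (Nat.modEq_zero_iff_dvd).1 (h2.trans h3)

lemma s9_endgame_up (n p q : ℕ) (hn : 2 ≤ n) (hq1 : 1 ≤ q) (hqn : q ≤ n - 1)
    (hpq : p * q % n = 1 % n) (h : (p:ℝ) * ((n:ℝ) - (q:ℝ)) < (n:ℝ) - 1) : False := by
  have hc : ((p * (n - q) : ℕ) : ℝ) < ((n - 1 : ℕ) : ℝ) := by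
    push_cast [Nat.cast_sub (show q ≤ n by omega), Nat.cast_sub (show 1 ≤ n by omega)]
    exact h
  have hlt : p * (n - q) < n - 1 := by exact_mod_cast hc
  have hdvd := s9_nat_modeq_pn n p q (by omega) hpq
  have hpos : 0 < p * (n - q) + 1 := by omega
  have := Nat.le_of_dvd hpos hdvd
  omega

lemma s9_endgame_low (n p q T : ℕ) (hn : 2 ≤ n) (hp1 : 1 ≤ p) (hpn : p ≤ n - 1) (hq1 : 1 ≤ q)
    (hqn : q ≤ n - 1) (hT1 : 1 ≤ T) (hTn : T ≤ n - 1)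
    (hpq : p * q % n = 1 % n)
    (h : ((n:ℝ) - (q:ℝ)) * ((n:ℝ) + (p:ℝ) * (T:ℝ)) < 2 * (n:ℝ) - (T:ℝ)) : False := by
  have hc : (((n - q) * (n + p * T) : ℕ) : ℝ) < ((2 * n - T : ℕ) : ℝ) := by
    push_cast [Nat.cast_sub (show q ≤ n by omega), Nat.cast_sub (show T ≤ 2 * n by omega)]
    exact h
  have hlt : (n - q) * (n + p * T) < 2 * n - T := by exact_mod_cast hc
  obtain ⟨X, hX⟩ : ∃ X, p * T = X := ⟨_, rfl⟩
  rw [hX] at hlt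
  by_cases h2 : 2 ≤ n - q
  · have h3 : 2 * (n + X) ≤ (n - q) * (n + X) := Nat.mul_le_mul_right _ h2
    have h4 : 2 * (n + X) < 2 * n - T := lt_of_le_of_lt h3 hlt
    omega
  · have hnq : n - q = 1 := by omega
    rw [hnq, Nat.one_mul] at hlt
    have hq' : q = n - 1 := by omega
    -- n ∣ p + 1, hence p + 1 = n
    have hdvd := s9_nat_modeq_pn n p q (by omega) hpq
    have hnq1 : n - q = 1 := hnq
    rw [hnq1, Nat.mul_one] at hdvd
    have hp1n : p + 1 ≤ n := by omega
    have := Nat.le_of_dvd (by omega) hdvd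
    have hpn : p + 1 = n := by omega
    -- T*(p+1) = X + T < n = p + 1, but T ≥ 1
    have h5 : X + T = T * (p + 1) := by rw [← hX]; ring
    have h6 : p + 1 ≤ T * (p + 1) := Nat.le_mul_of_pos_left _ (by omega)
    omega

set_option maxHeartbeats 1600000 in
/-- Lemma 2.2, third part: if in addition `g` avoids the finite set of
excluded values, then for `μ ∈ Λ⁺_{p,|M|}` with `μ+ν ∉ Λ⁺_{p,|M|}` all sine denominators
occurring in `V_ν(g;-ρ_p-sgn(M)(μ+ν))` are nonzero. -/
theorem statement9 (n p q : ℕ) (α g : ℝ)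
    (hn : 2 ≤ n) (hα : 0 < α) (hp1 : 1 ≤ p) (hpn : p ≤ n - 1) (hcop : Nat.Coprime p n)
    (htype : TypeI n p q α g)
    (Mz : ℤ) (hMz : 2 * π * p / α - n * g = (Mz : ℝ)) (hMz0 : Mz ≠ 0)
    (hexcl : ¬ ∃ A B C : ℕ, (A : ℝ) ≤ |(Mz : ℝ)| ∧ B ≤ p - 1 ∧ 1 ≤ C ∧ C ≤ n - 1 ∧
      g = (1 - Real.sign (2 * π * p / α - n * g) * A + B * (2 * π / α)) / C)
    (ω : ℕ → Fin n → ℝ)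
    (hωE : ∀ k : ℕ, 1 ≤ k → k ≤ n - 1 → ∑ i, ω k i = 0)
    (hωδ : ∀ j : ℕ, 1 ≤ j → j ≤ n - 1 → ∀ k : ℕ, 1 ≤ k → k ≤ n - 1 →
      inn (aa n p j) (ω k) = if j = k then (1 : ℝ) else 0)
    (r : ℕ) (hr1 : 1 ≤ r) (hrn : r ≤ n - 1)
    (ν : Fin n → ℝ) (hν : inOrbit n r ν)
    (μ : Fin n → ℝ) (hμ : μ ∈ Lam n |2 * π * p / α - n * g| ω)
    (hμν : μ + ν ∉ Lam n |2 * π * p / α - n * g| ω) :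
    ∀ j ∈ Icc 1 n, ∀ k ∈ Icc 1 n, j ≠ k → inn (ee n j - ee n k) ν = 1 →
      Real.sin (α * inn (ee n j - ee n k)
        (-(rhoP n p α g ω) - Real.sign (2 * π * p / α - n * g) • (μ + ν)) / 2) ≠ 0 := by
  intro j hj k hk hjk hinnν
  rw [Finset.mem_Icc] at hj hk
  rw [hMz] at hexcl hμ ⊢
  set β := 2 * π / α with hβdef
  obtain ⟨hq1, hqn, hpq, hwin⟩ := htype
  have hn0 : 0 < n := by omega
  have hnR : (2:ℝ) ≤ (n:ℝ) := by exact_mod_cast hn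
  have hpR : (1:ℝ) ≤ (p:ℝ) := by exact_mod_cast hp1
  have hqR : (1:ℝ) ≤ (q:ℝ) := by exact_mod_cast hq1
  have hqnR : (q:ℝ) ≤ (n:ℝ) - 1 := by
    have : (q:ℝ) ≤ ((n - 1 : ℕ):ℝ) := by exact_mod_cast hqn
    rwa [Nat.cast_sub (by omega), Nat.cast_one] at this
  have hpnR : (p:ℝ) ≤ (n:ℝ) - 1 := by
    have : (p:ℝ) ≤ ((n - 1 : ℕ):ℝ) := by exact_mod_cast hpn
    rwa [Nat.cast_sub (by omega), Nat.cast_one] at this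
  have hβpos : 0 < β := by rw [hβdef]; positivity
  have hMr : β * (p:ℝ) - (n:ℝ) * g = (Mz:ℝ) := by
    rw [← hMz, hβdef]; ring
  -- q is coprime to n
  have hqp1 : (q * p) % n = 1 % n := by rw [Nat.mul_comm]; exact hpq
  have hqcop : Nat.Coprime q n := Nat.coprime_of_mul_modEq_one p hqp1
  -- the chain length T
  set T := ((k + n - j) * q) % n with hTdef
  have hTltn : T < n := Nat.mod_lt _ hn0
  have hTk : (j + T * p) % n = k % n := by
    have h1 : T ≡ (k + n - j) * q [MOD n] := Nat.mod_modEq _ _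
    have h2 : T * p ≡ (k + n - j) * (q * p) [MOD n] := by
      have := h1.mul_right p
      calc T * p ≡ (k + n - j) * q * p [MOD n] := this
        _ = (k + n - j) * (q * p) := by ring
    have h3 : (k + n - j) * (q * p) ≡ (k + n - j) * 1 [MOD n] :=
      Nat.ModEq.mul_left _ hqp1
    have h4 : j + T * p ≡ j + (k + n - j) [MOD n] :=
      Nat.ModEq.add_left j (h2.trans (by simpa using h3))
    have h5 : j + (k + n - j) = k + n := by omega
    calc (j + T * p) % n = (j + (k + n - j)) % n := h4
      _ = (k + n) % n := by rw [h5]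
      _ = k % n := Nat.add_mod_right k n
  have hT1 : 1 ≤ T := by
    rcases Nat.eq_zero_or_pos T with h0 | h
    swap
    · exact h
    exfalso
    have hd : n ∣ (k + n - j) * q := Nat.dvd_of_mod_eq_zero h0
    have hd' : n ∣ (k + n - j) := (Nat.Coprime.dvd_of_dvd_mul_right hqcop.symm) hd
    have hge : n ≤ k + n - j := Nat.le_of_dvd (by omega) hd'
    have hd2 : n ∣ (k + n - j) - n := Nat.dvd_sub hd' dvd_rfl
    have hlt : (k + n - j) - n < n := by omega
    have := Nat.eq_zero_of_dvd_of_lt hd2 hlt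
    omega
  -- the canonical chain elements
  set l : ℕ → ℕ := fun t => (j + t * p - 1) % n + 1 with hldef
  have hlb : ∀ t, 1 ≤ l t ∧ l t ≤ n := by
    intro t
    have : (j + t * p - 1) % n < n := Nat.mod_lt _ hn0
    constructor <;> simp only [hldef] <;> omega
  have hlmod : ∀ t, (l t) % n = (j + t * p) % n := by
    intro t
    have hj1 : 1 ≤ j + t * p := by omega
    have h2 : (j + t * p - 1) % n + 1 ≡ (j + t * p - 1) + 1 [MOD n] :=
      (Nat.mod_modEq _ _).add_right 1
    calc (l t) % n = ((j + t * p - 1) % n + 1) % n := rfl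
      _ = ((j + t * p - 1) + 1) % n := h2
      _ = (j + t * p) % n := by rw [Nat.sub_add_cancel hj1]
  have hinj : ∀ t ∈ Finset.range T, ∀ t' ∈ Finset.range T, l t = l t' → t = t' := by
    intro t ht t' ht' heq
    rw [Finset.mem_range] at ht ht'
    have h1 : (j + t * p) % n = (j + t' * p) % n := by rw [← hlmod, ← hlmod, heq]
    have h3 : t * p ≡ t' * p [MOD n] := Nat.ModEq.add_left_cancel' j h1
    have h4 : t ≡ t' [MOD n] := Nat.ModEq.cancel_right_of_coprime hcop.symm h3
    have h5 : t % n = t' % n := h4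
    rw [Nat.mod_eq_of_lt (by omega), Nat.mod_eq_of_lt (by omega)] at h5
    exact h5
  set S := (Finset.range T).image l with hSdef
  have hcardS : S.card = T := by
    rw [hSdef, Finset.card_image_of_injOn (fun x hx y hy => hinj x hx y hy),
      Finset.card_range]
  have hSmem : ∀ u ∈ S, 1 ≤ u ∧ u ≤ n := by
    intro u hu
    rw [hSdef, Finset.mem_image] at hu
    obtain ⟨t, _, rfl⟩ := hu
    exact hlb t
  -- decomposition of the root
  have ha : ee n j - ee n k = ∑ t ∈ Finset.range T, aa n p (l t) := by
    rw [s9_tele n p j k T hTk]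
    exact Finset.sum_congr rfl fun t _ => s9_aa_mod n p _ _ (hlmod t).symm
  set d : ℝ := if n ∈ S then 1 else 0 with hddef
  have hpair : ∀ c, 1 ≤ c → c ≤ n - 1 →
      inn (ee n j - ee n k) (ω c) = (if c ∈ S then (1:ℝ) else 0) - d := by
    intro c hc1 hc2
    rw [ha, s9_inn_sum_left]
    have h1 : ∀ t ∈ Finset.range T, inn (aa n p (l t)) (ω c)
        = (if l t = c then (1:ℝ) else 0) - (if l t = n then 1 else 0) :=
      fun t _ => s9_pairing n p hn ω hωδ (l t) c (hlb t).1 (hlb t).2 hc1 hc2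
    rw [Finset.sum_congr rfl h1, Finset.sum_sub_distrib]
    have h2 : ∑ u ∈ S, (if u = c then (1:ℝ) else 0)
        = ∑ t ∈ Finset.range T, (if l t = c then (1:ℝ) else 0) := by
      rw [hSdef]
      exact Finset.sum_image hinj
    have h3 : ∑ u ∈ S, (if u = n then (1:ℝ) else 0)
        = ∑ t ∈ Finset.range T, (if l t = n then (1:ℝ) else 0) := by
      rw [hSdef]
      exact Finset.sum_image hinj
    rw [← h2, ← h3, Finset.sum_ite_eq' S c (fun _ => (1:ℝ)),
      Finset.sum_ite_eq' S n (fun _ => (1:ℝ)), hddef]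
  -- total pairing sum
  have htot : ∑ c ∈ Icc 1 (n - 1), inn (ee n j - ee n k) (ω c) = (T:ℝ) - (n:ℝ) * d := by
    have h1 : ∀ c ∈ Icc 1 (n - 1), inn (ee n j - ee n k) (ω c)
        = (if c ∈ S then (1:ℝ) else 0) - d := by
      intro c hc
      rw [Finset.mem_Icc] at hc
      exact hpair c hc.1 hc.2
    rw [Finset.sum_congr rfl h1, Finset.sum_sub_distrib, Finset.sum_const,
      Finset.sum_boole]
    have hfil : (Icc 1 (n - 1)).filter (fun c => c ∈ S) = S.erase n := by
      ext u
      simp only [Finset.mem_filter, Finset.mem_Icc, Finset.mem_erase]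
      constructor
      · rintro ⟨⟨hu1, hu2⟩, hu3⟩
        exact ⟨by omega, hu3⟩
      · rintro ⟨hu1, hu2⟩
        have := hSmem u hu2
        exact ⟨⟨this.1, by omega⟩, hu2⟩
    rw [hfil, Nat.card_Icc]
    by_cases hnS : n ∈ S
    · rw [Finset.card_erase_of_mem hnS, hcardS]
      simp only [hddef, if_pos hnS, nsmul_eq_mul, mul_one]
      have h2 : ((T - 1 : ℕ):ℝ) = (T:ℝ) - 1 := by
        rw [Nat.cast_sub hT1, Nat.cast_one]
      have h3 : ((n - 1 + 1 - 1 : ℕ):ℝ) = (n:ℝ) - 1 := by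
        rw [show n - 1 + 1 - 1 = n - 1 from by omega, Nat.cast_sub (by omega), Nat.cast_one]
      rw [h2, h3]
      ring
    · rw [Finset.erase_eq_of_notMem hnS, hcardS]
      simp [hddef, if_neg hnS]
  -- tail pairing sum is an integer
  obtain ⟨W, hW⟩ : ∃ W : ℤ,
      ∑ c ∈ Icc (n - p + 1) (n - 1), inn (ee n j - ee n k) (ω c) = (W:ℝ) := by
    have h1 : ∀ c ∈ Icc (n - p + 1) (n - 1), inn (ee n j - ee n k) (ω c)
        = (if c ∈ S then (1:ℝ) else 0) - d := by
      intro c hc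
      rw [Finset.mem_Icc] at hc
      exact hpair c (by omega) hc.2
    rw [Finset.sum_congr rfl h1, Finset.sum_sub_distrib, Finset.sum_const,
      Finset.sum_boole]
    refine ⟨((((Icc (n - p + 1) (n - 1)).filter (fun c => c ∈ S)).card : ℤ)
      - ((Icc (n - p + 1) (n - 1)).card : ℤ) * (if n ∈ S then 1 else 0)), ?_⟩
    by_cases hnS : n ∈ S <;>
      simp only [hddef, if_pos, if_neg, hnS, if_true, if_false, nsmul_eq_mul] <;>
      push_cast <;> ring
  -- pairing with rho
  have hrho : inn (ee n j - ee n k) (rhoP n p α g ω)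
      = g * ((T:ℝ) - (n:ℝ) * d) - β * (W:ℝ) := by
    unfold rhoP
    rw [← hβdef]
    rw [s9_inn_add_right, s9_inn_smul_right, s9_inn_smul_right, s9_inn_sum_right,
      s9_inn_sum_right]
    have hsplit : (∑ c ∈ Icc 1 (n - p), inn (ee n j - ee n k) (ω c))
        + (∑ c ∈ Icc (n - p + 1) (n - 1), inn (ee n j - ee n k) (ω c))
        = ∑ c ∈ Icc 1 (n - 1), inn (ee n j - ee n k) (ω c) := by
      have e1 : Icc 1 (n - p) = Ioc 0 (n - p) := Finset.Icc_add_one_left_eq_Ioc 0 (n - p)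
      have e2 : Icc (n - p + 1) (n - 1) = Ioc (n - p) (n - 1) := Finset.Icc_add_one_left_eq_Ioc _ _
      have e3 : Icc 1 (n - 1) = Ioc 0 (n - 1) := Finset.Icc_add_one_left_eq_Ioc 0 (n - 1)
      rw [e1, e2, e3]
      exact Finset.sum_Ioc_consecutive _ (Nat.zero_le _) (by omega)
    rw [hW] at hsplit ⊢
    rw [htot] at hsplit
    linear_combination (g : ℝ) * hsplit
  -- pairing with mu
  obtain ⟨mf, hmsum, hmeq⟩ := hμ
  set σn : ℕ := ∑ c ∈ Icc 1 (n - 1), mf c with hσdef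
  set aSn : ℕ := ∑ c ∈ Icc 1 (n - 1), (if c ∈ S then mf c else 0) with haSdef
  have haSσ : aSn ≤ σn := Finset.sum_le_sum (fun c _ => by split <;> omega)
  have hamu : inn (ee n j - ee n k) μ = (aSn:ℝ) - (σn:ℝ) * d := by
    rw [hmeq, s9_inn_sum_right]
    have h1 : ∀ c ∈ Icc 1 (n - 1), inn (ee n j - ee n k) ((mf c : ℝ) • ω c)
        = (if c ∈ S then (mf c : ℝ) else 0) - (mf c : ℝ) * d := by
      intro c hc
      rw [Finset.mem_Icc] at hc
      rw [s9_inn_smul_right, hpair c hc.1 hc.2]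
      split <;> ring
    rw [Finset.sum_congr rfl h1, Finset.sum_sub_distrib, ← Finset.sum_mul]
    congr 1
    · rw [haSdef]
      push_cast
      exact Finset.sum_congr rfl fun c _ => by split <;> simp
    · rw [hσdef]
      push_cast
      ring
  set Mabs : ℕ := Mz.natAbs with hMabsdef
  have hMabsR : |(Mz:ℝ)| = (Mabs:ℝ) := by
    rw [hMabsdef, Nat.cast_natAbs, Int.cast_abs]
  have hMabs1 : 1 ≤ Mabs := by
    rw [hMabsdef]
    omega
  have hσM : σn ≤ Mabs := by
    have h1 : ((σn:ℕ):ℝ) ≤ (Mabs:ℝ) := by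
      rw [← hMabsR, hσdef]
      push_cast
      exact hmsum
    exact_mod_cast h1
  have hMaR : (1:ℝ) ≤ (Mabs:ℝ) := by exact_mod_cast hMabs1
  have hσR : (σn:ℝ) ≤ (Mabs:ℝ) := by exact_mod_cast hσM
  have haSR : (aSn:ℝ) ≤ (σn:ℝ) := by exact_mod_cast haSσ
  have haS0 : (0:ℝ) ≤ (aSn:ℝ) := by positivity
  have hTR1 : (1:ℝ) ≤ (T:ℝ) := by exact_mod_cast hT1
  have hTRn : (T:ℝ) ≤ (n:ℝ) - 1 := by
    have : (T:ℝ) ≤ ((n - 1 : ℕ):ℝ) := by exact_mod_cast (by omega : T ≤ n - 1)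
    rwa [Nat.cast_sub (by omega), Nat.cast_one] at this
  -- suppose the sine vanishes
  intro hsin
  rw [Real.sin_eq_zero_iff] at hsin
  obtain ⟨m', hm'⟩ := hsin
  have hEval : inn (ee n j - ee n k)
      (-(rhoP n p α g ω) - Real.sign ((Mz:ℝ)) • (μ + ν))
      = -(g * ((T:ℝ) - (n:ℝ) * d) - β * (W:ℝ))
        - Real.sign ((Mz:ℝ)) * (((aSn:ℝ) - (σn:ℝ) * d) + 1) := by
    rw [s9_inn_sub_right, s9_inn_neg_right, s9_inn_smul_right, s9_inn_add_right,
      hrho, hamu, hinnν]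
  have hmain : -(g * ((T:ℝ) - (n:ℝ) * d) - β * (W:ℝ))
      - Real.sign ((Mz:ℝ)) * (((aSn:ℝ) - (σn:ℝ) * d) + 1) = β * (m':ℝ) := by
    rw [← hEval]
    have hαne : α ≠ 0 := ne_of_gt hα
    have h1 : α * inn (ee n j - ee n k)
        (-(rhoP n p α g ω) - Real.sign ((Mz:ℝ)) • (μ + ν)) = 2 * ((m':ℝ) * π) := by
      linarith [hm']
    have h2 : inn (ee n j - ee n k)
        (-(rhoP n p α g ω) - Real.sign ((Mz:ℝ)) • (μ + ν)) = 2 * ((m':ℝ) * π) / α := by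
      rw [eq_div_iff hαne]
      linear_combination h1
    rw [h2, hβdef]
    ring
  clear hEval hm' hmeq hmsum hpair htot hW hrho hamu ha hinj hlmod hTk
  clear hωδ hωE hν hμν hlb hSmem hcardS
  clear_value β T l S d σn aSn Mabs
  clear hTdef hldef hSdef hσdef haSdef hMabsdef hMz hj hk hjk hinnν hcop hqcop hqp1 hα hr1 hrn
  have hnpos : (0:ℝ) < (n:ℝ) := by linarith
  have haSM : aSn ≤ Mabs := le_trans haSσ hσM
  have hCcast : ((n - T : ℕ):ℝ) = (n:ℝ) - (T:ℝ) := by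
    rw [Nat.cast_sub (by omega)]
  have hTnR : (0:ℝ) < (n:ℝ) - (T:ℝ) := by linarith
  have hTpos : (0:ℝ) < (T:ℝ) := by linarith
  rcases hMz0.lt_or_gt with hMneg | hMpos
  · -- Mz < 0
    have hMrneg : (Mz:ℝ) < 0 := by exact_mod_cast hMneg
    rw [Real.sign_of_neg hMrneg] at hmain hexcl
    have hMcast : (Mz:ℝ) = -(Mabs:ℝ) := by
      rw [← hMabsR, abs_of_neg hMrneg]
      ring
    have hwin' : β * ((p:ℝ)/n) < g ∧ g < β * ((p:ℝ)/n + 1/((n:ℝ)*((n:ℝ)-(q:ℝ)))) := by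
      rcases hwin with h | h
      · exfalso
        rw [← hβdef] at h
        have h2 := mul_lt_mul_of_pos_left h.2 hnpos
        have h3 : (n:ℝ)*(β*((p:ℝ)/n)) = β*(p:ℝ) := by
          field_simp
        have h4 : (n:ℝ)*g < β*(p:ℝ) := by linarith only [h2, h3]
        have h5 : (0:ℝ) < β*(p:ℝ) - (n:ℝ)*g := by linarith only [h4]
        rw [hMr] at h5
        linarith only [h5, hMrneg]
      · rw [← hβdef] at h
        exact h
    obtain ⟨hglb, hgub⟩ := hwin'
    clear hwin
    have hnqpos : (0:ℝ) < (n:ℝ) - (q:ℝ) := by linarith only [hqnR, hnR]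
    have hg0 : 0 < g := by
      have h0 : 0 < β*((p:ℝ)/n) := by positivity
      linarith only [h0, hglb]
    have hMn : (n:ℝ)*g = β*(p:ℝ) + (Mabs:ℝ) := by
      have h0 := hMr
      rw [hMcast] at h0
      linarith only [h0]
    clear hMr hMcast hMrneg
    have hgubn2 : (n:ℝ)*((n:ℝ)-(q:ℝ))*g < β*((p:ℝ)*((n:ℝ)-(q:ℝ))+1) := by
      have h0 := mul_lt_mul_of_pos_left hgub (mul_pos hnpos hnqpos)
      have he : (n:ℝ)*((n:ℝ)-(q:ℝ))*(β*((p:ℝ)/n + 1/((n:ℝ)*((n:ℝ)-(q:ℝ)))))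
          = β*((p:ℝ)*((n:ℝ)-(q:ℝ))+1) := by
        field_simp
      linarith only [h0, he]
    have hqM' : ((n:ℝ)-(q:ℝ))*(Mabs:ℝ) < β := by
      have h2 := mul_lt_mul_of_pos_left hgub hnpos
      have h3 : (n:ℝ)*(β*((p:ℝ)/n + 1/((n:ℝ)*((n:ℝ)-(q:ℝ)))))
          = β*(p:ℝ) + β/((n:ℝ)-(q:ℝ)) := by
        field_simp
      have h4 : (Mabs:ℝ) < β/((n:ℝ)-(q:ℝ)) := by linarith only [h2, h3, hMn]
      have h5 := mul_lt_mul_of_pos_left h4 hnqpos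
      have h6 : ((n:ℝ)-(q:ℝ))*(β/((n:ℝ)-(q:ℝ))) = β := by field_simp
      linarith only [h5, h6]
    have hβ1 : (1:ℝ) < β := by
      nlinarith only [hqM', hMaR, hnqpos, hqnR, hnR]
    -- common upper-bound endgame: from β*p + 1 ≤ g*T derive False
    have hupend : β*(p:ℝ) + 1 ≤ g*(T:ℝ) → False := by
      intro hgT
      have hstep1 : (n:ℝ)*((n:ℝ)-(q:ℝ))*(β*(p:ℝ)+1) ≤ (n:ℝ)*((n:ℝ)-(q:ℝ))*(g*(T:ℝ)) :=
        mul_le_mul_of_nonneg_left hgT (mul_pos hnpos hnqpos).le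
      have hstep2 : ((n:ℝ)*((n:ℝ)-(q:ℝ))*g)*(T:ℝ) < (β*((p:ℝ)*((n:ℝ)-(q:ℝ))+1))*(T:ℝ) :=
        mul_lt_mul_of_pos_right hgubn2 hTpos
      have hx : (0:ℝ) < (p:ℝ)*((n:ℝ)-(q:ℝ))+1 := by
        nlinarith only [hpR, hnqpos]
      have hstep3 : (β*((p:ℝ)*((n:ℝ)-(q:ℝ))+1))*(T:ℝ)
          ≤ (β*((p:ℝ)*((n:ℝ)-(q:ℝ))+1))*((n:ℝ)-1) :=
        mul_le_mul_of_nonneg_left hTRn (mul_pos hβpos hx).le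
      have hchain : (n:ℝ)*((n:ℝ)-(q:ℝ))*(β*(p:ℝ)+1)
          < (β*((p:ℝ)*((n:ℝ)-(q:ℝ))+1))*((n:ℝ)-1) := by
        nlinarith only [hstep1, hstep2, hstep3]
      have hkey : (p:ℝ)*((n:ℝ)-(q:ℝ)) < (n:ℝ)-1 := by
        nlinarith only [hβpos, hchain, hnqpos, hnpos]
      exact s9_endgame_up n p q hn hq1 hqn hpq hkey
    -- common lower-bound endgame
    have hlowend : β*((n:ℝ) + (p:ℝ)*(T:ℝ)) ≤ (n:ℝ) + (n:ℝ)*(Mabs:ℝ) - (Mabs:ℝ)*(T:ℝ) → False := by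
      intro hfin
      have h1 : ((n:ℝ)-(q:ℝ))*(Mabs:ℝ)*((n:ℝ)+(p:ℝ)*(T:ℝ)) < β*((n:ℝ)+(p:ℝ)*(T:ℝ)) := by
        apply mul_lt_mul_of_pos_right hqM'
        nlinarith only [hTpos, hpR, hnpos]
      have h2 : (n:ℝ) ≤ (n:ℝ)*(Mabs:ℝ) := by nlinarith only [hMaR, hnpos]
      have hdiv : ((n:ℝ)-(q:ℝ))*((n:ℝ)+(p:ℝ)*(T:ℝ)) < 2*(n:ℝ) - (T:ℝ) := by
        nlinarith only [h1, h2, hfin, hMaR]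
      exact s9_endgame_low n p q T hn hp1 hpn hq1 hqn hT1 (by omega) hpq hdiv
    by_cases hnS : n ∈ S
    · -- s = -1, d = 1
      have hd1 : d = 1 := by rw [hddef, if_pos hnS]
      rw [hd1] at hmain
      set Bz : ℤ := (p:ℤ) + W - m' with hBzdef
      have hBzR : ((Bz:ℤ):ℝ) = (p:ℝ) + (W:ℝ) - (m':ℝ) := by
        rw [hBzdef]
        push_cast
        ring
      clear_value Bz
      have hβB : β * ((Bz:ℤ):ℝ) = g*(T:ℝ) - 1 - ((Mabs:ℝ) - (σn:ℝ) + (aSn:ℝ)) := by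
        rw [hBzR]
        linear_combination hmain - hMn
      have hσaSM : σn - aSn ≤ Mabs := le_trans (Nat.sub_le _ _) hσM
      have hAcast : ((Mabs - (σn - aSn) : ℕ):ℝ) = (Mabs:ℝ) - ((σn:ℝ) - (aSn:ℝ)) := by
        rw [Nat.cast_sub hσaSM, Nat.cast_sub haSσ]
      have hBlow : 0 ≤ Bz := by
        by_contra hcon
        push_neg at hcon
        have h1 : ((Bz:ℤ):ℝ) ≤ -1 := by exact_mod_cast (by omega : Bz ≤ -1)
        have h17 : (n:ℝ)*(β*((Bz:ℤ):ℝ)) ≤ (n:ℝ)*(β*(-1)) := by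
          apply mul_le_mul_of_nonneg_left _ hnpos.le
          nlinarith only [h1, hβpos]
        have hβBn : (n:ℝ)*(β*((Bz:ℤ):ℝ))
            = (T:ℝ)*((n:ℝ)*g) - (n:ℝ) - (n:ℝ)*((Mabs:ℝ) - (σn:ℝ) + (aSn:ℝ)) := by
          linear_combination (n:ℝ)*hβB
        have h16 : (T:ℝ)*((n:ℝ)*g) = (T:ℝ)*(β*(p:ℝ) + (Mabs:ℝ)) := by
          linear_combination (T:ℝ)*hMn
        have hσa : (n:ℝ)*(aSn:ℝ) ≤ (n:ℝ)*(σn:ℝ) := by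
          nlinarith only [haSR, hnpos]
        apply hlowend
        nlinarith only [h17, hβBn, h16, hσa]
      have hBup : Bz ≤ (p:ℤ) - 1 := by
        by_contra hcon
        push_neg at hcon
        have h1 : (p:ℝ) ≤ ((Bz:ℤ):ℝ) := by exact_mod_cast (by omega : (p:ℤ) ≤ Bz)
        have h2 : β*(p:ℝ) ≤ β*((Bz:ℤ):ℝ) := by nlinarith only [h1, hβpos]
        apply hupend
        nlinarith only [h2, hβB, haS0, hσR]
      apply hexcl
      refine ⟨Mabs - (σn - aSn), Bz.toNat, T, ?_, ?_, ?_, ?_, ?_⟩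
      · rw [hMabsR, hAcast]
        linarith only [haSR, haS0]
      · omega
      · omega
      · omega
      · rw [eq_div_iff (ne_of_gt hTpos)]
        have hBt : ((Bz.toNat:ℕ):ℝ) = ((Bz:ℤ):ℝ) := by
          exact_mod_cast congrArg (fun z : ℤ => (z:ℝ)) (Int.toNat_of_nonneg hBlow)
        rw [hBt, hAcast]
        linear_combination (-1:ℝ)*hβB
    · -- s = -1, d = 0
      have hd0 : d = 0 := by rw [hddef, if_neg hnS]
      rw [hd0] at hmain
      set Bz : ℤ := W - m' with hBzdef
      have hBzR : ((Bz:ℤ):ℝ) = (W:ℝ) - (m':ℝ) := by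
        rw [hBzdef]
        push_cast
        ring
      clear_value Bz
      have hβB : β * ((Bz:ℤ):ℝ) = g*(T:ℝ) - 1 - (aSn:ℝ) := by
        rw [hBzR]
        linear_combination hmain
      have hBlow : 0 ≤ Bz := by
        by_contra hcon
        push_neg at hcon
        have h1 : ((Bz:ℤ):ℝ) ≤ -1 := by exact_mod_cast (by omega : Bz ≤ -1)
        have h17 : (n:ℝ)*(β*((Bz:ℤ):ℝ)) ≤ (n:ℝ)*(β*(-1)) := by
          apply mul_le_mul_of_nonneg_left _ hnpos.le
          nlinarith only [h1, hβpos]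
        have hβBn : (n:ℝ)*(β*((Bz:ℤ):ℝ))
            = (T:ℝ)*((n:ℝ)*g) - (n:ℝ) - (n:ℝ)*(aSn:ℝ) := by
          linear_combination (n:ℝ)*hβB
        have h16 : (T:ℝ)*((n:ℝ)*g) = (T:ℝ)*(β*(p:ℝ) + (Mabs:ℝ)) := by
          linear_combination (T:ℝ)*hMn
        have hσa : (n:ℝ)*(aSn:ℝ) ≤ (n:ℝ)*(Mabs:ℝ) := by
          nlinarith only [haSR, hσR, hnpos]
        apply hlowend
        nlinarith only [h17, hβBn, h16, hσa]
      have hBup : Bz ≤ (p:ℤ) - 1 := by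
        by_contra hcon
        push_neg at hcon
        have h1 : (p:ℝ) ≤ ((Bz:ℤ):ℝ) := by exact_mod_cast (by omega : (p:ℤ) ≤ Bz)
        have h2 : β*(p:ℝ) ≤ β*((Bz:ℤ):ℝ) := by nlinarith only [h1, hβpos]
        apply hupend
        nlinarith only [h2, hβB, haS0]
      apply hexcl
      refine ⟨aSn, Bz.toNat, T, ?_, ?_, ?_, ?_, ?_⟩
      · rw [hMabsR]
        exact_mod_cast haSM
      · omega
      · omega
      · omega
      · rw [eq_div_iff (ne_of_gt hTpos)]
        have hBt : ((Bz.toNat:ℕ):ℝ) = ((Bz:ℤ):ℝ) := by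
          exact_mod_cast congrArg (fun z : ℤ => (z:ℝ)) (Int.toNat_of_nonneg hBlow)
        rw [hBt]
        linear_combination (-1:ℝ)*hβB
  · -- Mz > 0
    have hMrpos : (0:ℝ) < (Mz:ℝ) := by exact_mod_cast hMpos
    rw [Real.sign_of_pos hMrpos] at hmain hexcl
    have hMcast : (Mz:ℝ) = (Mabs:ℝ) := by rw [← hMabsR, abs_of_pos hMrpos]
    have hwin' : β * ((p:ℝ)/n - 1/((n:ℝ)*(q:ℝ))) < g ∧ g < β * ((p:ℝ)/n) := by
      rcases hwin with h | h
      · rw [← hβdef] at h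
        exact h
      · exfalso
        rw [← hβdef] at h
        have h2 := mul_lt_mul_of_pos_left h.1 hnpos
        have h3 : (n:ℝ)*(β*((p:ℝ)/n)) = β*(p:ℝ) := by field_simp
        have h4 : β*(p:ℝ) < (n:ℝ)*g := by linarith only [h2, h3]
        have h5 : β*(p:ℝ) - (n:ℝ)*g < 0 := by linarith only [h4]
        rw [hMr] at h5
        linarith only [h5, hMrpos]
    obtain ⟨hglb, hgub⟩ := hwin'
    clear hwin
    have hgubn : (n:ℝ) * g < β * (p:ℝ) := by
      have h2 := mul_lt_mul_of_pos_left hgub hnpos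
      have h3 : (n:ℝ)*(β*((p:ℝ)/n)) = β*(p:ℝ) := by field_simp
      linarith only [h2, h3]
    have hg0 : 0 < g := by
      have h3 : (1:ℝ)/((n:ℝ)*(q:ℝ)) ≤ (p:ℝ)/(n:ℝ) := by
        rw [div_le_div_iff₀ (by positivity) hnpos]
        nlinarith only [hpR, hqR, hnpos, mul_nonneg (sub_nonneg.mpr hqR) hnpos.le,
          mul_nonneg (sub_nonneg.mpr hpR)
            (mul_pos hnpos (lt_of_lt_of_le zero_lt_one hqR)).le]
      have h4 : 0 ≤ β * ((p:ℝ)/n - 1/((n:ℝ)*(q:ℝ))) := by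
        apply mul_nonneg hβpos.le
        linarith only [h3]
      linarith only [h4, hglb]
    have hqM : (q:ℝ) * (Mabs:ℝ) < β := by
      have h4 : (n:ℝ) * (β * ((p:ℝ)/n - 1/((n:ℝ)*(q:ℝ)))) = β*(p:ℝ) - β/(q:ℝ) := by
        field_simp
      have h5 : β*(p:ℝ) - β/(q:ℝ) < (n:ℝ)*g := by
        have h0 := mul_lt_mul_of_pos_left hglb hnpos
        linarith only [h0, h4]
      have h6 : (Mabs:ℝ) < β/(q:ℝ) := by
        rw [← hMcast, ← hMr]
        linarith only [h5]
      have h7 := mul_lt_mul_of_pos_left h6 (show (0:ℝ) < (q:ℝ) by linarith only [hqR])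
      have h8 : (q:ℝ) * (β/(q:ℝ)) = β := by
        field_simp
      linarith only [h7, h8]
    have hβ1 : (1:ℝ) < β := by nlinarith only [hqM, hMaR, hqR]
    have hMn : (n:ℝ)*g = β*(p:ℝ) - (Mabs:ℝ) := by
      have h0 := hMr
      rw [hMcast] at h0
      linarith only [h0]
    clear hMr hMcast hMrpos
    by_cases hnS : n ∈ S
    · -- s = 1, d = 1
      have hd1 : d = 1 := by rw [hddef, if_pos hnS]
      rw [hd1] at hmain
      set Bz : ℤ := m' - W with hBzdef
      have hBzR : ((Bz:ℤ):ℝ) = (m':ℝ) - (W:ℝ) := by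
        rw [hBzdef]
        push_cast
        ring
      clear_value Bz
      have hβB : β * ((Bz:ℤ):ℝ) = g*((n:ℝ)-(T:ℝ)) - 1 - (aSn:ℝ) + (σn:ℝ) := by
        rw [hBzR]
        linear_combination (-1:ℝ)*hmain
      have hBlow : 0 ≤ Bz := by
        by_contra hcon
        push_neg at hcon
        have h1 : ((Bz:ℤ):ℝ) ≤ -1 := by exact_mod_cast (by omega : Bz ≤ -1)
        have h2 : β * ((Bz:ℤ):ℝ) ≤ -β := by nlinarith only [h1, hβpos]
        have hgg : g*1 ≤ g*((n:ℝ)-(T:ℝ)) := by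
          apply mul_le_mul_of_nonneg_left _ hg0.le
          linarith only [hTRn, hTpos, hTnR]
        nlinarith only [hβB, haSR, hβ1, h2, hgg, hg0]
      have hBup : Bz ≤ (p:ℤ) - 1 := by
        by_contra hcon
        push_neg at hcon
        have h1 : (p:ℝ) ≤ ((Bz:ℤ):ℝ) := by exact_mod_cast (by omega : (p:ℤ) ≤ Bz)
        have h2 : β*(p:ℝ) ≤ β*((Bz:ℤ):ℝ) := by nlinarith only [h1, hβpos]
        have h3 := mul_lt_mul_of_pos_right hgubn hTnR
        have hβBn : (n:ℝ)*(β*((Bz:ℤ):ℝ))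
            = (n:ℝ)*g*((n:ℝ)-(T:ℝ)) - (n:ℝ) - (n:ℝ)*(aSn:ℝ) + (n:ℝ)*(σn:ℝ) := by
          linear_combination (n:ℝ)*hβB
        have h2n : (n:ℝ)*(β*(p:ℝ)) ≤ (n:ℝ)*(β*((Bz:ℤ):ℝ)) :=
          mul_le_mul_of_nonneg_left h2 hnpos.le
        have hσa : (n:ℝ)*(σn:ℝ) ≤ (n:ℝ)*(Mabs:ℝ) := by
          nlinarith only [hσR, hnpos]
        have haSnn : 0 ≤ (n:ℝ)*(aSn:ℝ) := by positivity
        have h4 : β*(p:ℝ)*(T:ℝ) < (n:ℝ)*(Mabs:ℝ) := by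
          nlinarith only [h2n, h3, hβBn, hσa, haSnn, hnpos]
        have h5 : (q:ℝ)*(Mabs:ℝ)*((p:ℝ)*(T:ℝ)) < β*((p:ℝ)*(T:ℝ)) := by
          apply mul_lt_mul_of_pos_right hqM
          nlinarith only [hpR, hTpos]
        have h6 : (q:ℝ)*(p:ℝ)*(T:ℝ) < (n:ℝ) := by nlinarith only [h4, h5, hMaR]
        have h7 : q * p * T < n := by exact_mod_cast h6
        have h8 : p * q = 1 := by
          have h9 : p * q ≤ q * p * T := by
            calc p * q = q * p * 1 := by ring
              _ ≤ q * p * T := Nat.mul_le_mul_left _ hT1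
          have h11 : p * q % n = p * q := Nat.mod_eq_of_lt (by omega)
          have h12 : 1 % n = 1 := Nat.mod_eq_of_lt (by omega)
          omega
        have hpR1 : (p:ℝ) = 1 := by
          rw [Nat.eq_one_of_mul_eq_one_right h8]
          norm_num
        have hqR1 : (q:ℝ) = 1 := by
          rw [Nat.eq_one_of_mul_eq_one_left h8]
          norm_num
        have h13 : (n:ℝ)*g = β - (Mabs:ℝ) := by
          rw [hMn, hpR1]
          ring
        have h15 : (n:ℝ)*((n:ℝ)*g) = (n:ℝ)*(β - (Mabs:ℝ)) := by
          linear_combination (n:ℝ)*h13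
        have h16 : (T:ℝ)*((n:ℝ)*g) = (T:ℝ)*(β - (Mabs:ℝ)) := by
          linear_combination (T:ℝ)*h13
        have h14 : 0 < (β - (Mabs:ℝ))*(T:ℝ) := by
          apply mul_pos _ hTpos
          nlinarith only [hqM, hqR1]
        have h17 : (n:ℝ)*(β*(p:ℝ)) = (n:ℝ)*β := by rw [hpR1]; ring
        nlinarith only [hβBn, h15, h16, h2n, h14, hσa, haSnn, h17, hnpos, hβpos]
      apply hexcl
      refine ⟨σn - aSn, Bz.toNat, n - T, ?_, ?_, ?_, ?_, ?_⟩
      · rw [hMabsR, Nat.cast_sub haSσ]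
        linarith only [haS0, hσR]
      · omega
      · omega
      · omega
      · rw [eq_div_iff (show ((n - T:ℕ):ℝ) ≠ 0 by rw [hCcast]; linarith only [hTnR])]
        have hBt : ((Bz.toNat:ℕ):ℝ) = ((Bz:ℤ):ℝ) := by
          exact_mod_cast congrArg (fun z : ℤ => (z:ℝ)) (Int.toNat_of_nonneg hBlow)
        rw [hBt, hCcast, Nat.cast_sub haSσ]
        linear_combination (-1:ℝ)*hβB
    · -- s = 1, d = 0
      have hd0 : d = 0 := by rw [hddef, if_neg hnS]
      rw [hd0] at hmain
      set Bz : ℤ := (p:ℤ) - W + m' with hBzdef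
      have hBzR : ((Bz:ℤ):ℝ) = (p:ℝ) - (W:ℝ) + (m':ℝ) := by
        rw [hBzdef]
        push_cast
        ring
      clear_value Bz
      have hβB : β * ((Bz:ℤ):ℝ) = g*((n:ℝ)-(T:ℝ)) - 1 + ((Mabs:ℝ) - (aSn:ℝ)) := by
        rw [hBzR]
        have hMr' : β * (p:ℝ) - (n:ℝ) * g = (Mabs:ℝ) := by
          linear_combination (-1:ℝ)*hMn
        linear_combination (-1:ℝ)*hmain + hMr'
      have hgnT : 0 < g * ((n:ℝ) - (T:ℝ)) := mul_pos hg0 hTnR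
      have hBlow : 0 ≤ Bz := by
        by_contra hcon
        push_neg at hcon
        have h1 : ((Bz:ℤ):ℝ) ≤ -1 := by exact_mod_cast (by omega : Bz ≤ -1)
        have h2 : β * ((Bz:ℤ):ℝ) ≤ -β := by nlinarith only [h1, hβpos]
        nlinarith only [hβB, hgnT, haSR, hσR, hβ1, h2]
      have hBup : Bz ≤ (p:ℤ) - 1 := by
        by_contra hcon
        push_neg at hcon
        have h1 : (p:ℝ) ≤ ((Bz:ℤ):ℝ) := by exact_mod_cast (by omega : (p:ℤ) ≤ Bz)
        have h2 : β*(p:ℝ) ≤ β*((Bz:ℤ):ℝ) := by nlinarith only [h1, hβpos]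
        have h3 := mul_lt_mul_of_pos_right hgubn hTnR
        have hβBn : (n:ℝ)*(β*((Bz:ℤ):ℝ))
            = (n:ℝ)*g*((n:ℝ)-(T:ℝ)) - (n:ℝ) + (n:ℝ)*((Mabs:ℝ) - (aSn:ℝ)) := by
          linear_combination (n:ℝ)*hβB
        have h2n : (n:ℝ)*(β*(p:ℝ)) ≤ (n:ℝ)*(β*((Bz:ℤ):ℝ)) :=
          mul_le_mul_of_nonneg_left h2 hnpos.le
        have haSnn : 0 ≤ (n:ℝ)*(aSn:ℝ) := by positivity
        have h4 : β*(p:ℝ)*(T:ℝ) < (n:ℝ)*(Mabs:ℝ) := by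
          nlinarith only [h2n, h3, hβBn, haSnn, hnpos]
        have h5 : (q:ℝ)*(Mabs:ℝ)*((p:ℝ)*(T:ℝ)) < β*((p:ℝ)*(T:ℝ)) := by
          apply mul_lt_mul_of_pos_right hqM
          nlinarith only [hpR, hTpos]
        have h6 : (q:ℝ)*(p:ℝ)*(T:ℝ) < (n:ℝ) := by nlinarith only [h4, h5, hMaR]
        have h7 : q * p * T < n := by exact_mod_cast h6
        have h8 : p * q = 1 := by
          have h9 : p * q ≤ q * p * T := by
            calc p * q = q * p * 1 := by ring
              _ ≤ q * p * T := Nat.mul_le_mul_left _ hT1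
          have h11 : p * q % n = p * q := Nat.mod_eq_of_lt (by omega)
          have h12 : 1 % n = 1 := Nat.mod_eq_of_lt (by omega)
          omega
        have hpR1 : (p:ℝ) = 1 := by
          rw [Nat.eq_one_of_mul_eq_one_right h8]
          norm_num
        have hqR1 : (q:ℝ) = 1 := by
          rw [Nat.eq_one_of_mul_eq_one_left h8]
          norm_num
        have h13 : (n:ℝ)*g = β - (Mabs:ℝ) := by
          rw [hMn, hpR1]
          ring
        have h15 : (n:ℝ)*((n:ℝ)*g) = (n:ℝ)*(β - (Mabs:ℝ)) := by
          linear_combination (n:ℝ)*h13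
        have h16 : (T:ℝ)*((n:ℝ)*g) = (T:ℝ)*(β - (Mabs:ℝ)) := by
          linear_combination (T:ℝ)*h13
        have h14 : 0 < (β - (Mabs:ℝ))*(T:ℝ) := by
          apply mul_pos _ hTpos
          nlinarith only [hqM, hqR1]
        have h17 : (n:ℝ)*(β*(p:ℝ)) = (n:ℝ)*β := by rw [hpR1]; ring
        nlinarith only [hβBn, h15, h16, h2n, h14, haSnn, h17, hnpos, hβpos]
      apply hexcl
      refine ⟨Mabs - aSn, Bz.toNat, n - T, ?_, ?_, ?_, ?_, ?_⟩
      · rw [hMabsR, Nat.cast_sub haSM]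
        linarith only [haS0]
      · omega
      · omega
      · omega
      · rw [eq_div_iff (show ((n - T:ℕ):ℝ) ≠ 0 by rw [hCcast]; linarith only [hTnR])]
        have hBt : ((Bz.toNat:ℕ):ℝ) = ((Bz:ℤ):ℝ) := by
          exact_mod_cast congrArg (fun z : ℤ => (z:ℝ)) (Int.toNat_of_nonneg hBlow)
        rw [hBt, hCcast, Nat.cast_sub haSM]
        linear_combination (-1:ℝ)*hβB
end
end
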